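/- arXiv:2207.10037 — 3 statements merged into one kernel-verified Lean document; each statement's English description precedes it below -/
import Mathlib

section
/- Let η be a differential k-form on the standard n-simplex σ ⊂ ℝⁿ (with 1 ≤ k ≤ n−1) whose coefficients are affine functions. If the pullback of η to every k-dimensional face of σ vanishes identically, then η is identically zero on σ. -/
open MeasureTheory Finset

/-- A real-valued function on `ℝⁿ` is affine if it has the form `x ↦ ∑ aᵢ xⁱ + b`. -/
def IsAffineFn {n : ℕ} (f : (Fin n → ℝ) → ℝ) : Prop :=
  ∃ (a : Fin n → ℝ) (b : ℝ), ∀ x, f x = (∑ i, a i * x i) + b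

/-- The standard `n`-simplex `{x : xⁱ ≥ 0, ∑ xⁱ ≤ 1}` in `ℝⁿ`. -/
def stdSimp (n : ℕ) : Set (Fin n → ℝ) :=
  {x | (∀ i, 0 ≤ x i) ∧ (∑ i, x i) ≤ 1}

/-- The basic alternating `k`-form `dx^I` (for a strictly increasing multi-index given by a
`k`-element subset `I` of `{1,…,n}`) evaluated on `k` vectors. -/
def dxI {n k : ℕ} (I : {s : Finset (Fin n) // s.card = k}) (v : Fin k → Fin n → ℝ) : ℝ :=
  Matrix.det (Matrix.of fun i j => v j ((I.1.orderIsoOfFin I.2 i : Fin n)))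

/-- The `k`-form `∑_I f_I dx^I` with coefficient functions `f_I`, evaluated at the point `x`
on the `k` vectors `v`. -/
def formEval {n k : ℕ} (f : {s : Finset (Fin n) // s.card = k} → (Fin n → ℝ) → ℝ)
    (x : Fin n → ℝ) (v : Fin k → Fin n → ℝ) : ℝ :=
  ∑ I : {s : Finset (Fin n) // s.card = k}, f I x * dxI I v

/-- The vertices of the standard `n`-simplex: `p₀ = 0`, `pᵢ = eᵢ`. -/
def vert (n : ℕ) : Fin (n+1) → Fin n → ℝ :=
  Fin.cases 0 (fun j => Pi.single j 1)

/-- Affine parametrization of the `k`-face of the standard `n`-simplex with vertex set `S`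
(vertices taken in increasing order), defined on the standard `k`-simplex. -/
def facePt {n k : ℕ} (S : {s : Finset (Fin (n+1)) // s.card = k+1}) (y : Fin k → ℝ) :
    Fin n → ℝ :=
  vert n ((S.1.orderIsoOfFin S.2 0 : Fin (n+1))) +
    ∑ s : Fin k, y s • (vert n ((S.1.orderIsoOfFin S.2 s.succ : Fin (n+1))) -
      vert n ((S.1.orderIsoOfFin S.2 0 : Fin (n+1))))

/-- The differential of the face parametrization `facePt S`. -/
def faceDir {n k : ℕ} (S : {s : Finset (Fin (n+1)) // s.card = k+1}) (w : Fin k → ℝ) :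
    Fin n → ℝ :=
  ∑ s : Fin k, w s • (vert n ((S.1.orderIsoOfFin S.2 s.succ : Fin (n+1))) -
    vert n ((S.1.orderIsoOfFin S.2 0 : Fin (n+1))))

/-- Barycentric coordinates of the standard `n`-simplex: `ν₀ = 1 - ∑ xⁱ`, `νᵢ = xⁱ`. -/
def nu (n : ℕ) (j : Fin (n+1)) (x : Fin n → ℝ) : ℝ :=
  Fin.cases (1 - ∑ i, x i) (fun i => x i) j

/-- The differentials `dνⱼ` of the barycentric coordinates, as linear functionals. -/
def dnu (n : ℕ) (j : Fin (n+1)) (v : Fin n → ℝ) : ℝ :=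
  Fin.cases (-(∑ i, v i)) (fun i => v i) j

/-- The Whitney form `W τ* = k! ∑ⱼ (-1)ʲ ν_{iⱼ} dν_{i₀} ∧ ⋯ ∧ (omit dν_{iⱼ}) ∧ ⋯ ∧ dν_{i_k}`
of the dual cochain of the face with vertex set `S`, evaluated at `x` on the vectors `v`. -/
def whitneyFace {n k : ℕ} (S : {s : Finset (Fin (n+1)) // s.card = k+1})
    (x : Fin n → ℝ) (v : Fin k → Fin n → ℝ) : ℝ :=
  (Nat.factorial k : ℝ) * ∑ j : Fin (k+1), (-1 : ℝ) ^ (j : ℕ) *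
    nu n ((S.1.orderIsoOfFin S.2 j : Fin (n+1))) x *
    Matrix.det (Matrix.of fun (t : Fin k) (m2 : Fin k) =>
      dnu n ((S.1.orderIsoOfFin S.2 (j.succAbove t) : Fin (n+1))) (v m2))

/-- The Whitney map `W`, extended linearly to all real `k`-cochains. -/
def whitney {n k : ℕ} (c : {s : Finset (Fin (n+1)) // s.card = k+1} → ℝ)
    (x : Fin n → ℝ) (v : Fin k → Fin n → ℝ) : ℝ :=
  ∑ S, c S * whitneyFace S x v

/-- The integral of a `k`-form (given by its evaluation function `F`) over the `k`-face with
vertex set `S`, computed via the parametrization `facePt S`. -/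
noncomputable def faceIntegral {n k : ℕ} (S : {s : Finset (Fin (n+1)) // s.card = k+1})
    (F : (Fin n → ℝ) → (Fin k → Fin n → ℝ) → ℝ) : ℝ :=
  ∫ y in stdSimp k, F (facePt S y) (fun s => faceDir S (Pi.single s 1))

/-- A `k`-form (given by its evaluation function) pulls back to a constant form on every
`k`-face of the standard `n`-simplex. -/
def ConstOnFaces {n k : ℕ} (F : (Fin n → ℝ) → (Fin k → Fin n → ℝ) → ℝ) : Prop :=
  ∀ S : {s : Finset (Fin (n+1)) // s.card = k+1}, ∃ cst : ℝ,
    ∀ y ∈ stdSimp k, ∀ w : Fin k → Fin k → ℝ,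
      F (facePt S y) (fun i => faceDir S (w i)) = cst * Matrix.det (Matrix.of fun i j => w j i)
section Aux
variable {n k : ℕ}

lemma vert_zero' : vert n 0 = 0 := by simp [vert]
lemma vert_succ' (j : Fin n) : vert n j.succ = Pi.single j 1 := by simp [vert]

lemma dxI_one {I : Finset (Fin n)} (hI : I.card = k) (v : Fin k → Fin n → ℝ)
    (hv : ∀ i j : Fin k, v j (I.orderEmbOfFin hI i) = if i = j then 1 else 0) :
    dxI ⟨I, hI⟩ v = 1 := by
  have : (Matrix.of fun i j => v j ((I.orderIsoOfFin hI i : Fin n))) = (1 : Matrix (Fin k) (Fin k) ℝ) := by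
    ext i j
    simp [Finset.coe_orderIsoOfFin_apply, hv, Matrix.one_apply]
  rw [dxI]
  simp only [this, Matrix.det_one]

lemma dxI_zero {I : Finset (Fin n)} (hI : I.card = k) (v : Fin k → Fin n → ℝ)
    {r : Fin n} (hr : r ∈ I) (hv : ∀ j, v j r = 0) :
    dxI ⟨I, hI⟩ v = 0 := by
  obtain ⟨i0, hi0⟩ := (I.orderIsoOfFin hI).surjective ⟨r, hr⟩
  apply Matrix.det_eq_zero_of_row_eq_zero i0
  intro j
  have : ((I.orderIsoOfFin hI i0 : Fin n)) = r := by rw [hi0]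
  simp only [Matrix.of_apply, Finset.coe_orderIsoOfFin_apply]
  rw [Finset.coe_orderIsoOfFin_apply] at this
  rw [this, hv]

lemma card_S0 {T : Finset (Fin n)} (hT : T.card = k) :
    (insert 0 (T.map (Fin.succEmb n))).card = k + 1 := by
  rw [Finset.card_insert_of_notMem, Finset.card_map, hT]
  simp [Finset.mem_map]

lemma enum_S0 {T : Finset (Fin n)} (hT : T.card = k) (hS : (insert 0 (T.map (Fin.succEmb n))).card = k+1) :
    ∀ j, (insert 0 (T.map (Fin.succEmb n))).orderEmbOfFin hS j
      = Fin.cases 0 (fun t => (T.orderEmbOfFin hT t).succ) j := by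
  intro j
  have h1 : (fun j => (Fin.cases 0 (fun t => (T.orderEmbOfFin hT t).succ) j : Fin (n+1)))
      = ⇑((insert 0 (T.map (Fin.succEmb n))).orderEmbOfFin hS) := by
    apply Finset.orderEmbOfFin_unique
    · intro x
      induction x using Fin.cases with
      | zero => simp
      | succ t =>
        simp only [Fin.cases_succ]
        apply Finset.mem_insert_of_mem
        simp only [Finset.mem_map]
        exact ⟨T.orderEmbOfFin hT t, Finset.orderEmbOfFin_mem _ _ _, rfl⟩
    · intro a b hab
      induction a using Fin.cases with
      | zero =>
        induction b using Fin.cases with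
        | zero => exact absurd hab (lt_irrefl _)
        | succ t => simpa using Fin.succ_pos _
      | succ t =>
        induction b using Fin.cases with
        | zero => exact absurd hab (by simp [Fin.lt_def])
        | succ t' =>
          simp only [Fin.cases_succ]
          rw [Fin.succ_lt_succ_iff]
          exact (T.orderEmbOfFin hT).strictMono (by simpa [Fin.succ_lt_succ_iff] using hab)
  exact (congrFun h1 j).symm


lemma helperSum (c : Fin (k+1)) (A : Fin (k+1) → Fin n → ℝ) :
    ∑ s : Fin k, (if s.succ = c then (1:ℝ) else 0) • (A s.succ - A 0) = A c - A 0 := by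
  induction c using Fin.cases with
  | zero =>
    simp [Fin.succ_ne_zero]
  | succ t =>
    rw [Finset.sum_eq_single t]
    · simp
    · intro b _ hb
      simp [Fin.succ_inj, hb]
    · simp

lemma facePt_S0 {T : Finset (Fin n)} (hT : T.card = k) (y : Fin k → ℝ) :
    facePt ⟨insert 0 (T.map (Fin.succEmb n)), card_S0 hT⟩ y
      = ∑ s : Fin k, y s • (Pi.single (T.orderEmbOfFin hT s) 1 : Fin n → ℝ) := by
  unfold facePt
  simp only [Finset.coe_orderIsoOfFin_apply, enum_S0 hT, Fin.cases_zero, Fin.cases_succ,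
    vert_zero', vert_succ', sub_zero, zero_add]

lemma faceDir_S0 {T : Finset (Fin n)} (hT : T.card = k) (w : Fin k → ℝ) :
    faceDir ⟨insert 0 (T.map (Fin.succEmb n)), card_S0 hT⟩ w
      = ∑ s : Fin k, w s • (Pi.single (T.orderEmbOfFin hT s) 1 : Fin n → ℝ) := by
  unfold faceDir
  simp only [Finset.coe_orderIsoOfFin_apply, enum_S0 hT, Fin.cases_zero, Fin.cases_succ,
    vert_zero', vert_succ', sub_zero]

lemma faceDir_S0_single {T : Finset (Fin n)} (hT : T.card = k) (i : Fin k) :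
    faceDir ⟨insert 0 (T.map (Fin.succEmb n)), card_S0 hT⟩ (Pi.single i 1)
      = (Pi.single (T.orderEmbOfFin hT i) 1 : Fin n → ℝ) := by
  rw [faceDir_S0 hT, Finset.sum_eq_single i]
  · simp
  · intro b _ hb
    simp [Pi.single_apply, hb]
  · simp

variable {f : {s : Finset (Fin n) // s.card = k} → (Fin n → ℝ) → ℝ}

lemma stepA
    (h : ∀ S : {s : Finset (Fin (n+1)) // s.card = k+1},
      ∀ y ∈ stdSimp k, ∀ w : Fin k → Fin k → ℝ,
        formEval f (facePt S y) (fun i => faceDir S (w i)) = 0)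
    {T : Finset (Fin n)} (hT : T.card = k)
    (y : Fin k → ℝ) (hy : y ∈ stdSimp k) :
    f ⟨T, hT⟩ (∑ s : Fin k, y s • (Pi.single (T.orderEmbOfFin hT s) 1 : Fin n → ℝ)) = 0 := by
  have H := h ⟨insert 0 (T.map (Fin.succEmb n)), card_S0 hT⟩ y hy (fun i => Pi.single i 1)
  rw [facePt_S0 hT] at H
  have hdirs : (fun i => faceDir ⟨insert 0 (T.map (Fin.succEmb n)), card_S0 hT⟩ (Pi.single i (1:ℝ)))
      = fun i => (Pi.single (T.orderEmbOfFin hT i) 1 : Fin n → ℝ) := by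
    funext i; exact faceDir_S0_single hT i
  rw [hdirs, formEval] at H
  set p := ∑ s : Fin k, y s • (Pi.single (T.orderEmbOfFin hT s) 1 : Fin n → ℝ) with hp
  rw [Fintype.sum_eq_single (⟨T, hT⟩ : {s : Finset (Fin n) // s.card = k})] at H
  · rw [dxI_one hT] at H
    · simpa using H
    · intro i j
      simp [Pi.single_apply, (T.orderEmbOfFin hT).injective.eq_iff, eq_comm]
  · intro I' hI'
    have hne : I'.1 ≠ T := fun hh => hI' (Subtype.ext hh)
    have : ∃ r ∈ I'.1, r ∉ T := by
      by_contra hc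
      push_neg at hc
      exact hne (Finset.eq_of_subset_of_card_le hc (by rw [I'.2, hT]))
    obtain ⟨r, hr, hrT⟩ := this
    have : dxI I' (fun i => (Pi.single (T.orderEmbOfFin hT i) 1 : Fin n → ℝ)) = 0 := by
      have : dxI ⟨I'.1, I'.2⟩ (fun i => (Pi.single (T.orderEmbOfFin hT i) 1 : Fin n → ℝ)) = 0 := by
        apply dxI_zero I'.2 _ hr
        intro j
        simp [Pi.single_apply]
        intro hh
        exact absurd (hh ▸ Finset.orderEmbOfFin_mem T hT j) hrT
      simpa using this
    rw [this, mul_zero]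

lemma fT_zero
    (h : ∀ S : {s : Finset (Fin (n+1)) // s.card = k+1},
      ∀ y ∈ stdSimp k, ∀ w : Fin k → Fin k → ℝ,
        formEval f (facePt S y) (fun i => faceDir S (w i)) = 0)
    {T : Finset (Fin n)} (hT : T.card = k) :
    f ⟨T, hT⟩ 0 = 0 := by
  have := stepA h hT 0 (by constructor <;> simp [stdSimp])
  simpa using this

lemma fT_single
    (h : ∀ S : {s : Finset (Fin (n+1)) // s.card = k+1},
      ∀ y ∈ stdSimp k, ∀ w : Fin k → Fin k → ℝ,
        formEval f (facePt S y) (fun i => faceDir S (w i)) = 0)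
    {T : Finset (Fin n)} (hT : T.card = k) {i : Fin n} (hi : i ∈ T) :
    f ⟨T, hT⟩ (Pi.single i 1) = 0 := by
  obtain ⟨t, ht⟩ := (T.orderIsoOfFin hT).surjective ⟨i, hi⟩
  have hti : T.orderEmbOfFin hT t = i := by
    rw [← Finset.coe_orderIsoOfFin_apply, ht]
  have hy : (Pi.single t 1 : Fin k → ℝ) ∈ stdSimp k := by
    constructor
    · intro s; simp [Pi.single_apply]; split <;> norm_num
    · simp [Finset.sum_pi_single']
  have := stepA h hT (Pi.single t 1) hy
  rw [Finset.sum_eq_single t] at this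
  · simpa [hti] using this
  · intro b _ hb
    simp [Pi.single_apply, hb]
  · simp


lemma helperSum' (c : Fin (k+1)) : ∑ s : Fin k, (if s.succ = c then (1:ℝ) else 0) ≤ 1 := by
  induction c using Fin.cases with
  | zero => simp [Fin.succ_ne_zero]
  | succ t =>
    simp only [Fin.succ_inj]
    rw [Finset.sum_ite_eq']
    simp

lemma card_S1 {U : Finset (Fin n)} (hU : U.card = k+1) :
    (U.map (Fin.succEmb n)).card = k+1 := by rw [Finset.card_map, hU]

lemma enum_S1 {U : Finset (Fin n)} (hU : U.card = k+1)
    (hS : (U.map (Fin.succEmb n)).card = k+1) :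
    ∀ j, (U.map (Fin.succEmb n)).orderEmbOfFin hS j = (U.orderEmbOfFin hU j).succ := by
  intro j
  have h1 : (fun j => (U.orderEmbOfFin hU j).succ) = ⇑((U.map (Fin.succEmb n)).orderEmbOfFin hS) := by
    apply Finset.orderEmbOfFin_unique
    · intro x
      simp only [Finset.mem_map]
      exact ⟨U.orderEmbOfFin hU x, Finset.orderEmbOfFin_mem _ _ _, by simp⟩
    · intro a b hab
      rw [Fin.succ_lt_succ_iff]
      exact (U.orderEmbOfFin hU).strictMono hab
  exact (congrFun h1 j).symm

lemma facePt_S1 {U : Finset (Fin n)} (hU : U.card = k+1) (y : Fin k → ℝ) :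
    facePt ⟨U.map (Fin.succEmb n), card_S1 hU⟩ y
      = (Pi.single (U.orderEmbOfFin hU 0) 1 : Fin n → ℝ)
        + ∑ s : Fin k, y s • ((Pi.single (U.orderEmbOfFin hU s.succ) 1 : Fin n → ℝ)
            - (Pi.single (U.orderEmbOfFin hU 0) 1 : Fin n → ℝ)) := by
  unfold facePt
  simp only [Finset.coe_orderIsoOfFin_apply, enum_S1 hU, vert_succ']

lemma faceDir_S1 {U : Finset (Fin n)} (hU : U.card = k+1) (w : Fin k → ℝ) :
    faceDir ⟨U.map (Fin.succEmb n), card_S1 hU⟩ w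
      = ∑ s : Fin k, w s • ((Pi.single (U.orderEmbOfFin hU s.succ) 1 : Fin n → ℝ)
            - (Pi.single (U.orderEmbOfFin hU 0) 1 : Fin n → ℝ)) := by
  unfold faceDir
  simp only [Finset.coe_orderIsoOfFin_apply, enum_S1 hU, vert_succ']

lemma stepB
    (h : ∀ S : {s : Finset (Fin (n+1)) // s.card = k+1},
      ∀ y ∈ stdSimp k, ∀ w : Fin k → Fin k → ℝ,
        formEval f (facePt S y) (fun i => faceDir S (w i)) = 0)
    {T : Finset (Fin n)} (hT : T.card = k) {m : Fin n} (hm : m ∉ T) :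
    f ⟨T, hT⟩ (Pi.single m 1) = 0 := by
  have hU : (insert m T).card = k + 1 := by rw [Finset.card_insert_of_notMem hm, hT]
  set U := insert m T with hUdef
  obtain ⟨j0, hj0'⟩ := (U.orderIsoOfFin hU).surjective ⟨m, Finset.mem_insert_self m T⟩
  have hj0 : U.orderEmbOfFin hU j0 = m := by rw [← Finset.coe_orderIsoOfFin_apply, hj0']
  have hTU : ∀ t : Fin k, T.orderEmbOfFin hT t = U.orderEmbOfFin hU (j0.succAbove t) := by
    have h1 : (fun t => U.orderEmbOfFin hU (j0.succAbove t)) = ⇑(T.orderEmbOfFin hT) := by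
      apply Finset.orderEmbOfFin_unique
      · intro t
        have hmem : U.orderEmbOfFin hU (j0.succAbove t) ∈ U := Finset.orderEmbOfFin_mem _ _ _
        have hne : U.orderEmbOfFin hU (j0.succAbove t) ≠ m := by
          rw [← hj0]
          exact fun hh => Fin.succAbove_ne j0 t ((U.orderEmbOfFin hU).injective hh)
        rcases Finset.mem_insert.1 hmem with h' | h'
        · exact absurd h' hne
        · exact h'
      · exact (U.orderEmbOfFin hU).strictMono.comp (Fin.strictMono_succAbove j0)
    intro t
    exact (congrFun h1 t).symm
  have hymem : (fun s : Fin k => if s.succ = j0 then (1:ℝ) else 0) ∈ stdSimp k := by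
    constructor
    · intro s
      simp only
      split <;> norm_num
    · exact helperSum' j0
  have H := h ⟨U.map (Fin.succEmb n), card_S1 hU⟩
      (fun s => if s.succ = j0 then (1:ℝ) else 0) hymem
      (fun i s => (if s.succ = j0.succAbove i then (1:ℝ) else 0) - (if s.succ = j0 then 1 else 0))
  have hpt : facePt ⟨U.map (Fin.succEmb n), card_S1 hU⟩
      (fun s => if s.succ = j0 then (1:ℝ) else 0) = (Pi.single m 1 : Fin n → ℝ) := by
    rw [facePt_S1 hU,
      helperSum j0 (fun j => (Pi.single (U.orderEmbOfFin hU j) 1 : Fin n → ℝ)), hj0]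
    abel
  have hdirs : (fun i => faceDir ⟨U.map (Fin.succEmb n), card_S1 hU⟩
        (fun s => (if s.succ = j0.succAbove i then (1:ℝ) else 0) - (if s.succ = j0 then 1 else 0)))
      = fun i => (Pi.single (U.orderEmbOfFin hU (j0.succAbove i)) 1 : Fin n → ℝ)
          - (Pi.single m 1 : Fin n → ℝ) := by
    funext i
    rw [faceDir_S1 hU]
    have hsplit : ∀ s : Fin k,
        ((if s.succ = j0.succAbove i then (1:ℝ) else 0) - (if s.succ = j0 then 1 else 0))
            • ((Pi.single (U.orderEmbOfFin hU s.succ) 1 : Fin n → ℝ)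
              - (Pi.single (U.orderEmbOfFin hU 0) 1 : Fin n → ℝ))
          = (if s.succ = j0.succAbove i then (1:ℝ) else 0)
            • ((Pi.single (U.orderEmbOfFin hU s.succ) 1 : Fin n → ℝ)
              - (Pi.single (U.orderEmbOfFin hU 0) 1 : Fin n → ℝ))
            - (if s.succ = j0 then (1:ℝ) else 0)
            • ((Pi.single (U.orderEmbOfFin hU s.succ) 1 : Fin n → ℝ)
              - (Pi.single (U.orderEmbOfFin hU 0) 1 : Fin n → ℝ)) := by
      intro s
      rw [sub_smul]
    rw [Finset.sum_congr rfl (fun s _ => hsplit s), Finset.sum_sub_distrib,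
      helperSum (j0.succAbove i) (fun j => (Pi.single (U.orderEmbOfFin hU j) 1 : Fin n → ℝ)),
      helperSum j0 (fun j => (Pi.single (U.orderEmbOfFin hU j) 1 : Fin n → ℝ)), hj0]
    abel
  rw [hpt, hdirs, formEval] at H
  rw [Fintype.sum_eq_single (⟨T, hT⟩ : {s : Finset (Fin n) // s.card = k})] at H
  · rw [dxI_one hT] at H
    · simpa using H
    · intro i j
      have h1 : U.orderEmbOfFin hU (j0.succAbove i) ≠ m := by
        intro hh
        have := hTU i
        rw [hh] at this
        exact hm (this ▸ Finset.orderEmbOfFin_mem T hT i)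
      have h2 : (U.orderEmbOfFin hU (j0.succAbove i) = U.orderEmbOfFin hU (j0.succAbove j)) ↔ (i = j) := by
        rw [(U.orderEmbOfFin hU).injective.eq_iff,
          (Fin.strictMono_succAbove j0).injective.eq_iff]
      simp [Pi.single_apply, hTU i, h1, h2]
  · intro I' hI'
    by_cases hmI : m ∈ I'.1
    · have : f ⟨I'.1, I'.2⟩ (Pi.single m 1) = 0 := fT_single h I'.2 hmI
      simp only [Subtype.coe_eta] at this
      rw [this, zero_mul]
    · have hne : I'.1 ≠ T := fun hh => hI' (Subtype.ext hh)
      have hsub : ∃ r ∈ I'.1, r ∉ U := by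
        by_contra hc
        push_neg at hc
        have hTsub : I'.1 ⊆ T := by
          intro r hr
          rcases Finset.mem_insert.1 (hc r hr) with h' | h'
          · exact absurd (h' ▸ hr) hmI
          · exact h'
        exact hne (Finset.eq_of_subset_of_card_le hTsub (by rw [I'.2, hT]))
      obtain ⟨r, hr, hrU⟩ := hsub
      have hz : dxI ⟨I'.1, I'.2⟩ (fun i => (Pi.single (U.orderEmbOfFin hU (j0.succAbove i)) 1 : Fin n → ℝ)
          - (Pi.single m 1 : Fin n → ℝ)) = 0 := by
        apply dxI_zero I'.2 _ hr
        intro j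
        have hr1 : r ≠ U.orderEmbOfFin hU (j0.succAbove j) := by
          intro hh
          exact hrU (hh ▸ Finset.orderEmbOfFin_mem U hU (j0.succAbove j))
        have hr2 : r ≠ m := fun hh => hrU (hh ▸ Finset.mem_insert_self m T)
        simp [Pi.single_apply, hr1, hr2]
      simp only [Subtype.coe_eta] at hz
      rw [hz, mul_zero]

end Aux

/-- A `k`-form with affine coefficients whose pullback to every `k`-face of the standard
`n`-simplex vanishes identically is identically zero on the simplex. -/
theorem vanishing_pullbacks_imply_zero {n k : ℕ} (hk : 1 ≤ k) (hkn : k ≤ n - 1)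
    (f : {s : Finset (Fin n) // s.card = k} → (Fin n → ℝ) → ℝ)
    (hf : ∀ I, IsAffineFn (f I))
    (h : ∀ S : {s : Finset (Fin (n+1)) // s.card = k+1},
      ∀ y ∈ stdSimp k, ∀ w : Fin k → Fin k → ℝ,
        formEval f (facePt S y) (fun i => faceDir S (w i)) = 0) :
    ∀ x ∈ stdSimp n, ∀ v : Fin k → Fin n → ℝ, formEval f x v = 0 := by
  intro x _ v
  have hzero : ∀ I : {s : Finset (Fin n) // s.card = k}, ∀ z : Fin n → ℝ, f I z = 0 := by
    intro I z
    obtain ⟨a, b, hab⟩ := hf I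
    have hb : b = 0 := by
      have h0 := fT_zero h I.2
      simp only [Subtype.coe_eta] at h0
      rw [hab] at h0
      simpa using h0
    have ha : ∀ i, a i = 0 := by
      intro i
      have hsingle : f I (Pi.single i 1) = 0 := by
        by_cases hi : i ∈ I.1
        · have := fT_single h I.2 hi
          simpa only [Subtype.coe_eta] using this
        · have := stepB h I.2 hi
          simpa only [Subtype.coe_eta] using this
      rw [hab, hb, add_zero] at hsingle
      simpa [Pi.single_apply, mul_ite] using hsingle
    rw [hab, hb]
    simp [ha]
  rw [formEval]
  simp [hzero]
end

section
/- For every k-face τ of the standard n-simplex σ and every k-face τ′, the integral over τ′ of the Whitney form Wτ* equals 1 if τ′ = τ and 0 otherwise; that is, the de Rham map R satisfies R∘W = id on k-cochains. -/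
open MeasureTheory Finset

def corner (k : ℕ) (c : ℝ) : Set (Fin k → ℝ) := {x | (∀ i, 0 ≤ x i) ∧ ∑ i, x i ≤ c}

lemma corner_empty {k : ℕ} {c : ℝ} (h : c < 0) : corner k c = ∅ := by
  ext x
  simp only [corner, Set.mem_setOf_eq, Set.mem_empty_iff_false, iff_false, not_and]
  intro hx
  have : (0:ℝ) ≤ ∑ i, x i := Finset.sum_nonneg fun i _ => hx i
  linarith

lemma measurableSet_corner (k : ℕ) (c : ℝ) : MeasurableSet (corner k c) := by
  have h1 : MeasurableSet {x : Fin k → ℝ | ∀ i, 0 ≤ x i} := by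
    have : {x : Fin k → ℝ | ∀ i, 0 ≤ x i} = ⋂ i, {x : Fin k → ℝ | 0 ≤ x i} := by
      ext x; simp [Set.mem_iInter]
    rw [this]
    exact MeasurableSet.iInter fun i => measurableSet_le measurable_const (measurable_pi_apply i)
  have h2 : MeasurableSet {x : Fin k → ℝ | ∑ i, x i ≤ c} :=
    measurableSet_le (Finset.measurable_sum _ fun i _ => measurable_pi_apply i) measurable_const
  exact h1.inter h2

lemma volume_corner : ∀ (k : ℕ) (c : ℝ), 0 ≤ c →
    volume (corner k c) = ENNReal.ofReal (c ^ k / k.factorial) := by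
  intro k
  induction k with
  | zero =>
    intro c hc
    have : corner 0 c = Set.univ := by
      ext x
      simp [corner, hc]
    rw [this]
    rw [show (volume : Measure (Fin 0 → ℝ)) = Measure.pi fun _ => volume from volume_pi,
      Measure.pi_univ]
    simp
  | succ k ih =>
    intro c hc
    set e := MeasurableEquiv.piFinSuccAbove (fun _ : Fin (k+1) => ℝ) 0 with he
    set t : Set (ℝ × (Fin k → ℝ)) :=
      {p | 0 ≤ p.1 ∧ (∀ i, 0 ≤ p.2 i) ∧ p.1 + ∑ i, p.2 i ≤ c} with ht
    have htm : MeasurableSet t := by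
      have hteq : t = {p : ℝ × (Fin k → ℝ) | 0 ≤ p.1} ∩ ((⋂ i, {p : ℝ × (Fin k → ℝ) | 0 ≤ p.2 i})
          ∩ {p : ℝ × (Fin k → ℝ) | p.1 + ∑ i, p.2 i ≤ c}) := by
        ext p
        simp only [ht, Set.mem_setOf_eq, Set.mem_inter_iff, Set.mem_iInter]
        try tauto
      rw [hteq]
      exact (measurableSet_le measurable_const measurable_fst).inter
        ((MeasurableSet.iInter fun i => measurableSet_le measurable_const
          ((measurable_pi_apply i).comp measurable_snd)).inter
        (measurableSet_le (measurable_fst.add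
          (Finset.measurable_sum _ fun i _ => (measurable_pi_apply i).comp measurable_snd))
          measurable_const))
    have hpre : corner (k+1) c = e ⁻¹' t := by
      ext x
      simp only [corner, Set.mem_setOf_eq, Set.mem_preimage, he,
        MeasurableEquiv.piFinSuccAbove_apply, ht, Fin.insertNthEquiv, Fin.succAbove_zero]
      constructor
      · rintro ⟨h1, h2⟩
        exact ⟨h1 0, fun i => h1 i.succ, by rwa [Fin.sum_univ_succ] at h2⟩
      · rintro ⟨h1, h2, h3⟩
        refine ⟨fun i => Fin.cases h1 h2 i, by rwa [Fin.sum_univ_succ]⟩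
    have hvol : volume (corner (k+1) c) = (volume.prod volume) t := by
      rw [hpre, ← Measure.volume_eq_prod]
      exact (volume_preserving_piFinSuccAbove (fun _ : Fin (k+1) => ℝ) 0).measure_preimage
        htm.nullMeasurableSet
    rw [hvol, Measure.prod_apply htm]
    have hslice : ∀ x : ℝ, volume (Prod.mk x ⁻¹' t) =
        ENNReal.ofReal (Set.indicator (Set.Icc 0 c) (fun x => (c - x)^k / k.factorial) x) := by
      intro x
      by_cases hx : x ∈ Set.Icc 0 c
      · have : Prod.mk x ⁻¹' t = corner k (c - x) := by
          ext v
          simp only [Set.mem_preimage, ht, Set.mem_setOf_eq, corner, hx.1, true_and]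
          constructor
          · rintro ⟨h2, h3⟩; exact ⟨h2, by linarith⟩
          · rintro ⟨h2, h3⟩; exact ⟨h2, by linarith⟩
        rw [this, ih _ (by linarith [hx.2]), Set.indicator_of_mem hx]
      · have : Prod.mk x ⁻¹' t = ∅ := by
          rcases not_and_or.1 ((Set.mem_Icc).not.1 hx) with h | h
          · push_neg at h
            ext v
            simp only [Set.mem_preimage, ht, Set.mem_setOf_eq, Set.mem_empty_iff_false, iff_false]
            intro hv; linarith [hv.1]
          · push_neg at h
            ext v
            simp only [Set.mem_preimage, ht, Set.mem_setOf_eq, Set.mem_empty_iff_false, iff_false]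
            rintro ⟨h1, h2, h3⟩
            have : (0:ℝ) ≤ ∑ i, v i := Finset.sum_nonneg fun i _ => h2 i
            linarith
        rw [this, Set.indicator_of_notMem hx]
        simp
    simp_rw [hslice]
    have hint : Integrable (Set.indicator (Set.Icc 0 c) (fun x => (c - x)^k / k.factorial)) := by
      rw [integrable_indicator_iff measurableSet_Icc]
      exact (Continuous.integrableOn_Icc (by continuity))
    have hnn : 0 ≤ᵐ[volume] Set.indicator (Set.Icc 0 c) (fun x => (c - x)^k / k.factorial) := by
      filter_upwards with x
      apply Set.indicator_nonneg
      intro y hy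
      exact div_nonneg (pow_nonneg (by linarith [hy.2]) k) (by positivity)
    rw [← ofReal_integral_eq_lintegral_ofReal hint hnn]
    congr 1
    rw [integral_indicator measurableSet_Icc,
      MeasureTheory.integral_Icc_eq_integral_Ioc, ← intervalIntegral.integral_of_le hc]
    have : (∫ x in (0:ℝ)..c, (c - x)^k / k.factorial)
        = (∫ x in (0:ℝ)..c, (c - x)^k) / k.factorial := by
      rw [intervalIntegral.integral_div]
    rw [this, intervalIntegral.integral_comp_sub_left (fun u => u ^ k) c]
    simp only [sub_zero, sub_self]
    rw [integral_pow]
    rw [Nat.factorial_succ]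
    have hk : ((k:ℝ) + 1) ≠ 0 := by positivity
    have hkf : (k.factorial : ℝ) ≠ 0 := Nat.cast_ne_zero.2 k.factorial_ne_zero
    field_simp
    simp only [zero_pow (Nat.succ_ne_zero k), sub_zero, Nat.cast_mul, Nat.cast_add, Nat.cast_one]
    ring

section Aux

variable {n k : ℕ}

lemma nu_vert (i j : Fin (n+1)) : nu n i (vert n j) = if i = j then 1 else 0 := by
  refine Fin.cases ?_ (fun l => ?_) i <;> refine Fin.cases ?_ (fun m => ?_) j
  · simp [nu, vert]
  · simp [nu, vert, Finset.sum_pi_single', (Fin.succ_ne_zero m).symm]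
  · simp [nu, vert, Fin.succ_ne_zero l]
  · simp [nu, vert, Pi.single_apply, Fin.succ_inj]

lemma nu_add_dnu (i : Fin (n+1)) (x v : Fin n → ℝ) :
    nu n i (x + v) = nu n i x + dnu n i v := by
  refine Fin.cases ?_ (fun l => ?_) i
  · simp [nu, dnu, Finset.sum_add_distrib]; ring
  · simp [nu, dnu]

lemma dnu_eq (i : Fin (n+1)) (v : Fin n → ℝ) : dnu n i v = nu n i v - nu n i 0 := by
  have h := nu_add_dnu i 0 v
  rw [zero_add] at h
  linarith

lemma dnu_sum (i : Fin (n+1)) {m : ℕ} (f : Fin m → Fin n → ℝ) :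
    dnu n i (∑ s, f s) = ∑ s, dnu n i (f s) := by
  refine Fin.cases ?_ (fun l => ?_) i
  · simp [dnu, Finset.sum_apply, Finset.sum_comm (γ := Fin n)]
  · simp [dnu, Finset.sum_apply]

lemma dnu_smul (i : Fin (n+1)) (c : ℝ) (v : Fin n → ℝ) :
    dnu n i (c • v) = c * dnu n i v := by
  refine Fin.cases ?_ (fun l => ?_) i
  · simp [dnu, Finset.mul_sum]
  · simp [dnu]

lemma dnu_sub (i : Fin (n+1)) (u v : Fin n → ℝ) :
    dnu n i (u - v) = dnu n i u - dnu n i v := by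
  refine Fin.cases ?_ (fun l => ?_) i
  · simp [dnu, Finset.sum_sub_distrib]; ring
  · simp [dnu]

lemma dnu_vert_sub (i a b : Fin (n+1)) :
    dnu n i (vert n a - vert n b) = (if i = a then (1:ℝ) else 0) - (if i = b then 1 else 0) := by
  rw [dnu_sub, dnu_eq, dnu_eq i (vert n b), nu_vert, nu_vert]
  ring

lemma nu_facePt_apply (T : {s : Finset (Fin (n+1)) // s.card = k+1}) (i : Fin (n+1))
    (y : Fin k → ℝ) : nu n i (facePt T y) =
    (if i = (T.1.orderIsoOfFin T.2 0 : Fin (n+1)) then 1 else 0) +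
      ∑ s : Fin k, y s * ((if i = (T.1.orderIsoOfFin T.2 s.succ : Fin (n+1)) then 1 else 0) -
        (if i = (T.1.orderIsoOfFin T.2 0 : Fin (n+1)) then 1 else 0)) := by
  rw [facePt, nu_add_dnu, dnu_sum, nu_vert]
  congr 1
  refine Finset.sum_congr rfl fun s _ => ?_
  rw [dnu_smul, dnu_vert_sub]

lemma dnu_faceDir_apply (T : {s : Finset (Fin (n+1)) // s.card = k+1}) (i : Fin (n+1))
    (w : Fin k → ℝ) : dnu n i (faceDir T w) =
    ∑ s : Fin k, w s * ((if i = (T.1.orderIsoOfFin T.2 s.succ : Fin (n+1)) then 1 else 0) -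
      (if i = (T.1.orderIsoOfFin T.2 0 : Fin (n+1)) then 1 else 0)) := by
  rw [faceDir, dnu_sum]
  refine Finset.sum_congr rfl fun s _ => ?_
  rw [dnu_smul, dnu_vert_sub]

lemma orderIso_coe_inj (T : {s : Finset (Fin (n+1)) // s.card = k+1}) (a b : Fin (k+1)) :
    (T.1.orderIsoOfFin T.2 a : Fin (n+1)) = (T.1.orderIsoOfFin T.2 b : Fin (n+1)) ↔ a = b := by
  constructor
  · intro h
    exact (T.1.orderIsoOfFin T.2).injective (Subtype.coe_injective h)
  · rintro rfl; rfl

lemma orderIso_coe_mem (T : {s : Finset (Fin (n+1)) // s.card = k+1}) (a : Fin (k+1)) :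
    (T.1.orderIsoOfFin T.2 a : Fin (n+1)) ∈ T.1 :=
  (T.1.orderIsoOfFin T.2 a).2

lemma nu_facePt_of_not_mem {T : {s : Finset (Fin (n+1)) // s.card = k+1}} {i : Fin (n+1)}
    (h : i ∉ T.1) (y : Fin k → ℝ) : nu n i (facePt T y) = 0 := by
  have hne : ∀ j : Fin (k+1), ¬ i = T.1.orderEmbOfFin T.2 j := by
    rintro j rfl
    exact h (Finset.orderEmbOfFin_mem _ _ _)
  rw [nu_facePt_apply]
  simp [hne]

lemma dnu_faceDir_of_not_mem {T : {s : Finset (Fin (n+1)) // s.card = k+1}} {i : Fin (n+1)}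
    (h : i ∉ T.1) (w : Fin k → ℝ) : dnu n i (faceDir T w) = 0 := by
  have hne : ∀ j : Fin (k+1), ¬ i = T.1.orderEmbOfFin T.2 j := by
    rintro j rfl
    exact h (Finset.orderEmbOfFin_mem _ _ _)
  rw [dnu_faceDir_apply]
  simp [hne]

lemma nu_facePt_self (T : {s : Finset (Fin (n+1)) // s.card = k+1}) (j : Fin (k+1))
    (y : Fin k → ℝ) : nu n ((T.1.orderIsoOfFin T.2 j : Fin (n+1))) (facePt T y) =
    Fin.cases (1 - ∑ s, y s) y j := by
  rw [nu_facePt_apply]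
  simp only [orderIso_coe_inj]
  refine Fin.cases ?_ (fun m => ?_) j
  · simp [Finset.sum_sub_distrib, (Fin.succ_ne_zero _).symm]
    ring
  · simp [Fin.succ_ne_zero m, Fin.succ_inj]

lemma dnu_faceDir_single (T : {s : Finset (Fin (n+1)) // s.card = k+1}) (j : Fin (k+1))
    (s0 : Fin k) : dnu n ((T.1.orderIsoOfFin T.2 j : Fin (n+1))) (faceDir T (Pi.single s0 1)) =
    (if j = s0.succ then 1 else 0) - (if j = 0 then 1 else 0) := by
  rw [dnu_faceDir_apply]
  simp only [orderIso_coe_inj, Pi.single_apply]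
  rw [Finset.sum_congr rfl (fun s _ => by
    rw [show ((if s = s0 then (1:ℝ) else 0) * ((if j = s.succ then 1 else 0) -
      (if j = 0 then 1 else 0))) = if s = s0 then ((if j = s.succ then (1:ℝ) else 0) -
      (if j = 0 then 1 else 0)) else 0 from by split <;> simp])]
  rw [Finset.sum_ite_eq' Finset.univ s0]
  simp

end Aux

/-- `R ∘ W = id`: the integral of `Wτ*` over a `k`-face `τ′` is `1` if `τ′ = τ` and `0` else. -/
theorem deRham_whitney_id {n k : ℕ}
    (S T : {s : Finset (Fin (n+1)) // s.card = k+1}) :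
    faceIntegral T (whitneyFace S) = if T = S then 1 else 0 := by
  classical
  by_cases hTS : T = S
  · subst hTS
    rw [if_pos rfl]
    have hfac : (k.factorial : ℝ) ≠ 0 := Nat.cast_ne_zero.2 k.factorial_ne_zero
    have key : ∀ y : Fin k → ℝ,
        whitneyFace T (facePt T y) (fun s => faceDir T (Pi.single s 1)) = (k.factorial : ℝ) := by
      intro y
      set E : Matrix (Fin (k+1)) (Fin (k+1)) ℝ := Matrix.of fun j m =>
        (Fin.cases (nu n ((T.1.orderIsoOfFin T.2 j : Fin (n+1))) (facePt T y))
          (fun t => dnu n ((T.1.orderIsoOfFin T.2 j : Fin (n+1)))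
            (faceDir T (Pi.single t 1))) m : ℝ) with hE
      have hE0 : ∀ j : Fin (k+1), E j 0 = (Fin.cases (1 - ∑ s, y s) y j : ℝ) := by
        intro j
        rw [hE]
        simp only [Matrix.of_apply, Fin.cases_zero]
        exact nu_facePt_self T j y
      have hEs : ∀ (j : Fin (k+1)) (t : Fin k), E j t.succ
          = (if j = t.succ then 1 else 0) - (if j = 0 then 1 else 0) := by
        intro j t
        rw [hE]
        simp only [Matrix.of_apply, Fin.cases_succ]
        exact dnu_faceDir_single T j t
      have h1 : whitneyFace T (facePt T y) (fun s => faceDir T (Pi.single s 1))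
          = (k.factorial : ℝ) * E.det := by
        rw [whitneyFace, Matrix.det_succ_column_zero]
        congr 1
      set B : Matrix (Fin (k+1)) (Fin (k+1)) ℝ := E.updateRow 0 (Pi.single 0 1) with hB
      have hBdet : B.det = 1 := by
        rw [Matrix.det_of_lowerTriangular]
        · rw [Fin.prod_univ_succ]
          have h00 : B 0 0 = 1 := by rw [hB, Matrix.updateRow_self]; simp
          have hii : ∀ i : Fin k, B i.succ i.succ = 1 := by
            intro i
            rw [hB, Matrix.updateRow_ne (Fin.succ_ne_zero i), hEs]
            simp [Fin.succ_ne_zero i]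
          simp [h00, hii]
        · intro a b hab
          have hab' : a < b := hab
          refine Fin.cases ?_ (fun t => fun hab' => ?_) b hab'
          · exact fun h => absurd h (Fin.not_lt_zero a)
          · refine Fin.cases ?_ (fun i => ?_) a hab' <;> intro hab'
            · rw [hB, Matrix.updateRow_self, Pi.single_eq_of_ne (Fin.succ_ne_zero t)]
            · rw [hB, Matrix.updateRow_ne (Fin.succ_ne_zero i), hEs,
                if_neg (Fin.ne_of_lt hab'), if_neg (Fin.succ_ne_zero i)]
              ring
      have hErow : E = B.updateRow 0 ((1:ℝ) • B 0 + ∑ j ∈ Finset.univ.erase (0 : Fin (k+1)),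
          (fun _ : Fin (k+1) => (-1:ℝ)) j • B j) := by
        have hBrow : ∀ i : Fin k, B i.succ = E i.succ := fun i =>
          Matrix.updateRow_ne (Fin.succ_ne_zero i)
        have hv : ((1:ℝ) • B 0 + ∑ j ∈ Finset.univ.erase (0 : Fin (k+1)),
            (fun _ : Fin (k+1) => (-1:ℝ)) j • B j) = E 0 := by
          funext m
          have hsum : (∑ j ∈ Finset.univ.erase (0 : Fin (k+1)),
              (fun _ : Fin (k+1) => (-1:ℝ)) j • B j) m = -∑ i : Fin k, E i.succ m := by
            rw [Finset.sum_apply, Finset.sum_erase_eq_sub (Finset.mem_univ (0 : Fin (k+1))),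
              Fin.sum_univ_succ]
            simp [hBrow]
          rw [Pi.add_apply, hsum, one_smul]
          rw [hB, Matrix.updateRow_self]
          refine Fin.cases ?_ (fun t => ?_) m
          · rw [hE0 0]
            simp only [Fin.cases_zero]
            have : ∀ i : Fin k, E i.succ 0 = y i := fun i => by
              rw [hE0 i.succ]; simp
            simp [this]
            ring
          · rw [hEs 0 t, if_neg (Fin.succ_ne_zero t).symm, if_pos rfl]
            have : ∀ i : Fin k, E i.succ t.succ = if i = t then (1:ℝ) else 0 := fun i => by
              rw [hEs i.succ t, if_neg (Fin.succ_ne_zero i)]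
              simp [Fin.succ_inj]
            simp [this, Pi.single_eq_of_ne (Fin.succ_ne_zero t)]
        rw [hv]
        funext j
        rcases eq_or_ne j 0 with rfl | hj
        · rw [Matrix.updateRow_self]
        · rw [Matrix.updateRow_ne hj, hB, Matrix.updateRow_ne hj]
      have hEdet : E.det = 1 := by
        rw [hErow, Matrix.det_updateRow_sum_aux B (Finset.univ.erase (0 : Fin (k+1)))
          (Finset.notMem_erase _ _) _ 1, hBdet]
        simp
      rw [h1, hEdet, mul_one]
    rw [faceIntegral]
    simp only [key]
    rw [MeasureTheory.setIntegral_const]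
    rw [show stdSimp k = corner k 1 from rfl, measureReal_def, volume_corner k 1 zero_le_one]
    rw [one_pow, ENNReal.toReal_ofReal (by positivity), smul_eq_mul]
    field_simp
  · rw [if_neg hTS]
    have hnsub : ¬ S.1 ⊆ T.1 := by
      intro hsub
      exact hTS (Subtype.ext (Finset.eq_of_subset_of_card_le hsub (by rw [S.2, T.2])).symm)
    obtain ⟨i, hiS, hiT⟩ := Finset.not_subset.1 hnsub
    set j0 : Fin (k+1) := (S.1.orderIsoOfFin S.2).symm ⟨i, hiS⟩ with hj0def
    have hj0 : (S.1.orderIsoOfFin S.2 j0 : Fin (n+1)) = i := by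
      rw [hj0def, OrderIso.apply_symm_apply]
    have hkey : ∀ y : Fin k → ℝ,
        whitneyFace S (facePt T y) (fun s => faceDir T (Pi.single s 1)) = 0 := by
      intro y
      rw [whitneyFace]
      refine mul_eq_zero_of_right _ (Finset.sum_eq_zero fun j _ => ?_)
      by_cases hj : j = j0
      · subst hj
        rw [hj0, nu_facePt_of_not_mem hiT, mul_zero, zero_mul]
      · obtain ⟨t, ht⟩ := Fin.exists_succAbove_eq (Ne.symm hj)
        have hdet : Matrix.det (Matrix.of fun (t : Fin k) (m2 : Fin k) =>
            dnu n ((S.1.orderIsoOfFin S.2 (j.succAbove t) : Fin (n+1)))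
              ((fun s => faceDir T (Pi.single s 1)) m2)) = 0 := by
          apply Matrix.det_eq_zero_of_row_eq_zero t
          intro m
          rw [Matrix.of_apply, ht, hj0]
          exact dnu_faceDir_of_not_mem hiT _
        rw [hdet, mul_zero]
    rw [faceIntegral]
    simp only [hkey]
    exact integral_zero _ _
end

section
/- The Whitney map W from k-cochains on the standard n-simplex to k-forms with affine coefficients and constant pullbacks to k-faces is a linear isomorphism onto the space Λᵏₑ of such forms; in particular dim Λᵏₑ = (n+1 choose k+1). -/
open MeasureTheory Finset

namespace WhitneyAux

abbrev Faces (n k : ℕ) := {s : Finset (Fin (n+1)) // s.card = k+1}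
abbrev Idx (n k : ℕ) := {s : Finset (Fin n) // s.card = k}

variable {n k : ℕ}

def vS (S : Faces n k) (j : Fin (k+1)) : Fin (n+1) := S.1.orderIsoOfFin S.2 j
def ordI (I : Idx n k) (t : Fin k) : Fin n := I.1.orderIsoOfFin I.2 t

lemma vS_mem (S : Faces n k) (j : Fin (k+1)) : vS S j ∈ S.1 := (S.1.orderIsoOfFin S.2 j).2
lemma ordI_mem (I : Idx n k) (t : Fin k) : ordI I t ∈ I.1 := (I.1.orderIsoOfFin I.2 t).2

lemma vS_inj (S : Faces n k) : Function.Injective (vS S) := fun a b h =>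
  (S.1.orderIsoOfFin S.2).injective (Subtype.ext h)

lemma ordI_inj (I : Idx n k) : Function.Injective (ordI I) := fun a b h =>
  (I.1.orderIsoOfFin I.2).injective (Subtype.ext h)

lemma vS_surj (S : Faces n k) {x : Fin (n+1)} (hx : x ∈ S.1) : ∃ j, vS S j = x :=
  ⟨(S.1.orderIsoOfFin S.2).symm ⟨x, hx⟩, by simp [vS]⟩

lemma ordI_surj (I : Idx n k) {x : Fin n} (hx : x ∈ I.1) : ∃ t, ordI I t = x :=
  ⟨(I.1.orderIsoOfFin I.2).symm ⟨x, hx⟩, by simp [ordI]⟩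

lemma dnu_add (j : Fin (n+1)) (a b : Fin n → ℝ) :
    dnu n j (a + b) = dnu n j a + dnu n j b := by
  induction j using Fin.cases <;> simp [dnu, Finset.sum_add_distrib] <;> ring

lemma dnu_smul (j : Fin (n+1)) (r : ℝ) (a : Fin n → ℝ) :
    dnu n j (r • a) = r * dnu n j a := by
  induction j using Fin.cases <;> simp [dnu, Finset.mul_sum]

lemma dnu_sub (j : Fin (n+1)) (a b : Fin n → ℝ) :
    dnu n j (a - b) = dnu n j a - dnu n j b := by
  induction j using Fin.cases <;> simp [dnu, Finset.sum_sub_distrib] <;> ring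

lemma dnu_sum (j : Fin (n+1)) {ι : Type*} (s : Finset ι) (g : ι → Fin n → ℝ) :
    dnu n j (∑ i ∈ s, g i) = ∑ i ∈ s, dnu n j (g i) := by
  induction j using Fin.cases with
  | zero =>
    simp only [dnu, Fin.cases_zero, Finset.sum_apply, ← Finset.sum_neg_distrib]
    rw [Finset.sum_comm]
  | succ i => simp [dnu, Finset.sum_apply]

lemma nu_eq (j : Fin (n+1)) (x : Fin n → ℝ) :
    nu n j x = dnu n j x + (if j = 0 then 1 else 0) := by
  induction j using Fin.cases <;> simp [nu, dnu, Fin.succ_ne_zero] <;> ring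

lemma dnu_vert (j m : Fin (n+1)) :
    dnu n j (vert n m) = (if j = m then 1 else 0) - (if j = 0 then 1 else 0) := by
  induction j using Fin.cases with
  | zero =>
    induction m using Fin.cases with
    | zero => simp [dnu, vert]
    | succ m' => simp [dnu, vert, (Fin.succ_ne_zero m').symm]
  | succ i =>
    induction m using Fin.cases with
    | zero => simp [dnu, vert, Fin.succ_ne_zero]
    | succ m' => simp [dnu, vert, Pi.single_apply, Fin.succ_inj, Fin.succ_ne_zero]


lemma dnu_faceDir (S : Faces n k) (j : Fin (n+1)) (w : Fin k → ℝ) :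
    dnu n j (faceDir S w) =
      ∑ s, w s * ((if j = vS S s.succ then 1 else 0) - (if j = vS S 0 then 1 else 0)) := by
  rw [faceDir, dnu_sum]
  refine Finset.sum_congr rfl fun s _ => ?_
  rw [dnu_smul, dnu_sub, dnu_vert, dnu_vert]
  show w s * (((if j = vS S s.succ then 1 else 0) - _) - ((if j = vS S 0 then 1 else 0) - _)) = _
  ring

lemma facePt_eq (S : Faces n k) (y : Fin k → ℝ) :
    facePt S y = vert n (vS S 0) + faceDir S y := rfl

lemma nu_facePt (S : Faces n k) (j : Fin (n+1)) (y : Fin k → ℝ) :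
    nu n j (facePt S y) =
      (if j = vS S 0 then 1 else 0) * (1 - ∑ s, y s) +
        ∑ s, (if j = vS S s.succ then 1 else 0) * y s := by
  rw [nu_eq, facePt_eq, dnu_add, dnu_faceDir, dnu_vert]
  simp only [mul_sub, sub_mul, one_mul, Finset.sum_sub_distrib, ← Finset.sum_mul]
  rw [Finset.sum_congr rfl (fun (s : Fin k) (_ : s ∈ univ) =>
    mul_comm (y s) (if j = vS S s.succ then (1:ℝ) else 0))]
  ring

lemma nu_facePt_self (S : Faces n k) (j : Fin (k+1)) (y : Fin k → ℝ) :
    nu n (vS S j) (facePt S y) = nu k j y := by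
  rw [nu_facePt]
  induction j using Fin.cases with
  | zero =>
    simp [(vS_inj S).eq_iff, (Fin.succ_ne_zero _).symm, nu]
  | succ t =>
    simp [(vS_inj S).eq_iff, Fin.succ_ne_zero, Fin.succ_inj, nu]

lemma dnu_faceDir_self (S : Faces n k) (j : Fin (k+1)) (w : Fin k → ℝ) :
    dnu n (vS S j) (faceDir S w) = dnu k j w := by
  rw [dnu_faceDir]
  induction j using Fin.cases with
  | zero =>
    simp [(vS_inj S).eq_iff, (Fin.succ_ne_zero _).symm, dnu]
  | succ t =>
    simp [(vS_inj S).eq_iff, Fin.succ_ne_zero, Fin.succ_inj, dnu]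

lemma detC (y : Fin k → ℝ) (w : Fin k → Fin k → ℝ) :
    ∑ j : Fin (k+1), (-1:ℝ)^(j:ℕ) * nu k j y *
      (Matrix.of fun t m => dnu k (j.succAbove t) (w m)).det
      = (Matrix.of fun i j => w j i).det := by
  classical
  set B : Matrix (Fin (k+1)) (Fin (k+1)) ℝ :=
    Matrix.of fun j m => Fin.cases (nu k j y) (fun m' => dnu k j (w m')) m with hB
  have h1 : ∑ j : Fin (k+1), (-1:ℝ)^(j:ℕ) * nu k j y *
      (Matrix.of fun t m => dnu k (j.succAbove t) (w m)).det = B.det := by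
    rw [Matrix.det_succ_column_zero]
    refine Finset.sum_congr rfl fun j _ => ?_
    congr 1
  have h2 : (B.updateRow 0 (∑ j, B j)).det = B.det := by
    have h := Matrix.det_updateRow_sum B 0 (fun _ => (1:ℝ))
    simpa using h
  have h3 : (∑ j, B j) = (fun m => Fin.cases 1 (fun _ => 0) m) := by
    funext m
    rw [show (∑ j, B j) m = ∑ j, B j m from Finset.sum_apply m _ _]
    induction m using Fin.cases with
    | zero =>
      show ∑ j, nu k j y = _
      rw [Fin.sum_univ_succ]
      simp [nu]
    | succ m' =>
      show ∑ j, dnu k j (w m') = _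
      rw [Fin.sum_univ_succ]
      simp [dnu]
  have h4 : (B.updateRow 0 (fun m => Fin.cases 1 (fun _ => 0) m)).det
      = (Matrix.of fun (t m : Fin k) => w m t).det := by
    rw [Matrix.det_succ_row_zero]
    rw [Fin.sum_univ_succ]
    have hz : ∀ j : Fin k, (B.updateRow 0 (fun m => Fin.cases 1 (fun _ => 0) m)) 0 j.succ = 0 := by
      intro j; simp
    simp only [Matrix.updateRow_self, Fin.cases_zero, Fin.cases_succ]
    rw [Finset.sum_eq_zero (fun j _ => by simp)]
    simp only [Fin.val_zero, pow_zero, one_mul, mul_one, add_zero]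
    have hsub : ((B.updateRow 0 fun m => Fin.cases 1 (fun _ => 0) m).submatrix Fin.succ
        (Fin.succAbove 0)) = Matrix.of fun (t m : Fin k) => w m t := by
      ext t m
      show (B.updateRow 0 (fun m => Fin.cases 1 (fun _ => 0) m)) t.succ (Fin.succAbove 0 m) = w m t
      rw [Fin.succAbove_zero, Matrix.updateRow_ne (Fin.succ_ne_zero t)]
      show dnu k t.succ (w m) = w m t
      simp [dnu]
    rw [hsub]
  rw [h1, ← h2, h3, h4]

lemma whitneyFace_pullback (S T : Faces n k) (y : Fin k → ℝ) (w : Fin k → Fin k → ℝ) :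
    whitneyFace S (facePt T y) (fun i => faceDir T (w i)) =
      (if S = T then (Nat.factorial k : ℝ) else 0) *
        (Matrix.of fun i j => w j i).det := by
  by_cases hST : S = T
  · subst hST
    rw [if_pos rfl, whitneyFace]
    have hterm : ∀ j : Fin (k+1),
        (-1 : ℝ) ^ (j : ℕ) * nu n ((S.1.orderIsoOfFin S.2 j : Fin (n+1))) (facePt S y) *
          (Matrix.of fun (t : Fin k) (m2 : Fin k) =>
            dnu n ((S.1.orderIsoOfFin S.2 (j.succAbove t) : Fin (n+1))) (faceDir S (w m2))).det
        = (-1 : ℝ) ^ (j : ℕ) * nu k j y *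
          (Matrix.of fun (t : Fin k) (m2 : Fin k) => dnu k (j.succAbove t) (w m2)).det := by
      intro j
      rw [show ((S.1.orderIsoOfFin S.2 j : Fin (n+1))) = vS S j from rfl, nu_facePt_self]
      have hm : (Matrix.of fun (t : Fin k) (m2 : Fin k) =>
            dnu n ((S.1.orderIsoOfFin S.2 (j.succAbove t) : Fin (n+1))) (faceDir S (w m2)))
          = Matrix.of fun (t : Fin k) (m2 : Fin k) => dnu k (j.succAbove t) (w m2) := by
        ext t m2
        exact dnu_faceDir_self S (j.succAbove t) (w m2)
      rw [hm]
    rw [Finset.sum_congr rfl fun j _ => hterm j, detC]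
  · rw [if_neg hST, zero_mul, whitneyFace]
    have hne : ¬ S.1 ⊆ T.1 := by
      intro hsub
      exact hST (Subtype.ext (Finset.eq_of_subset_of_card_le hsub (by rw [S.2, T.2])))
    obtain ⟨i, hiS, hiT⟩ := Finset.not_subset.mp hne
    obtain ⟨j₀, hj₀⟩ := vS_surj S hiS
    have hnumem : ∀ j' : Fin (k+1), nu n (vS S j₀) (facePt T y) = 0 ∨ True := fun _ => Or.inr trivial
    rw [Finset.sum_eq_zero, mul_zero]
    intro j _
    by_cases hj : j = j₀
    · subst hj
      have : nu n (vS S j) (facePt T y) = 0 := by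
        rw [nu_facePt]
        have h1 : (vS S j = vS T 0) = False := by
          simp only [eq_iff_iff, iff_false]
          intro h; rw [hj₀] at h; exact hiT (h ▸ vS_mem T 0)
        have h2 : ∀ s : Fin k, (vS S j = vS T s.succ) = False := by
          intro s
          simp only [eq_iff_iff, iff_false]
          intro h; rw [hj₀] at h; exact hiT (h ▸ vS_mem T s.succ)
        simp only [h1, h2, if_false]
        simp
      rw [show ((S.1.orderIsoOfFin S.2 j : Fin (n+1))) = vS S j from rfl, this]
      ring
    · obtain ⟨t₀, ht₀⟩ := Fin.exists_succAbove_eq (Ne.symm hj : j₀ ≠ j)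
      have hdet : (Matrix.of fun (t : Fin k) (m2 : Fin k) =>
          dnu n ((S.1.orderIsoOfFin S.2 (j.succAbove t) : Fin (n+1))) (faceDir T (w m2))).det = 0 := by
        apply Matrix.det_eq_zero_of_row_eq_zero t₀
        intro m2
        show dnu n (vS S (j.succAbove t₀)) (faceDir T (w m2)) = 0
        rw [ht₀, dnu_faceDir]
        apply Finset.sum_eq_zero
        intro s _
        have h1 : (vS S j₀ = vS T s.succ) = False := by
          simp only [eq_iff_iff, iff_false]
          intro h; rw [hj₀] at h; exact hiT (h ▸ vS_mem T s.succ)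
        have h2 : (vS S j₀ = vS T 0) = False := by
          simp only [eq_iff_iff, iff_false]
          intro h; rw [hj₀] at h; exact hiT (h ▸ vS_mem T 0)
        simp [h1, h2]
      rw [hdet, mul_zero]

lemma whitney_pullback (c : Faces n k → ℝ) (S : Faces n k) (y : Fin k → ℝ)
    (w : Fin k → Fin k → ℝ) :
    whitney c (facePt S y) (fun i => faceDir S (w i)) =
      c S * (Nat.factorial k : ℝ) * (Matrix.of fun i j => w j i).det := by
  rw [whitney]
  rw [Finset.sum_congr rfl fun T _ => by rw [whitneyFace_pullback T S y w]]
  rw [Finset.sum_eq_single S]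
  · rw [if_pos rfl]; ring
  · intro T _ hT; rw [if_neg hT]; ring
  · intro h; exact absurd (Finset.mem_univ S) h

lemma id_matrix (w : Fin k → Fin k → ℝ) (hw : w = fun i => Pi.single i 1) :
    (Matrix.of fun i j => w j i) = (1 : Matrix (Fin k) (Fin k) ℝ) := by
  subst hw
  ext i j
  simp [Matrix.one_apply, Pi.single_apply, eq_comm]

lemma whitney_injective : Function.Injective (whitney (n := n) (k := k)) := by
  intro c d h
  funext S
  have h1 : whitney c (facePt S 0) (fun i => faceDir S (Pi.single i 1)) =
      whitney d (facePt S 0) (fun i => faceDir S (Pi.single i 1)) := by rw [h]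
  have h2 := whitney_pullback c S 0 (fun i => Pi.single i 1)
  have h3 := whitney_pullback d S 0 (fun i => Pi.single i 1)
  rw [h2, h3, id_matrix _ rfl, Matrix.det_one, mul_one, mul_one] at h1
  exact mul_right_cancel₀ (Nat.cast_ne_zero.mpr (Nat.factorial_ne_zero k)) h1
lemma ordI_image (I : Idx n k) : Finset.image (ordI I) Finset.univ = I.1 := by
  apply Finset.eq_of_subset_of_card_le
  · intro x hx
    obtain ⟨t, _, rfl⟩ := Finset.mem_image.mp hx
    exact ordI_mem I t
  · rw [Finset.card_image_of_injective _ (ordI_inj I), Finset.card_univ, Fintype.card_fin, I.2]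

lemma det_eq_sum_perm (M : Matrix (Fin k) (Fin k) ℝ) :
    M.det = ∑ σ : Equiv.Perm (Fin k), ((Equiv.Perm.sign σ : ℤ) : ℝ) * ∏ i, M i (σ i) := by
  rw [← Matrix.det_transpose, Matrix.det_apply']
  rfl

lemma cauchyBinet (A : Matrix (Fin k) (Fin n) ℝ) (V : Matrix (Fin n) (Fin k) ℝ) :
    (A * V).det = ∑ I : Idx n k,
      (A.submatrix id (ordI I)).det * (V.submatrix (ordI I) id).det := by
  classical
  have h1 : (A * V).det =
      ∑ r : Fin k → Fin n, (∏ t, A t (r t)) * (V.submatrix r id).det := by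
    have hrow : (A * V) = Matrix.of fun t => ∑ i : Fin n, A t i • V i := by
      ext t m
      simp [Matrix.mul_apply, Finset.sum_apply]
    rw [hrow]
    have hms := (Matrix.detRowAlternating (R := ℝ) (n := Fin k)).toMultilinearMap.map_sum
      (g := fun (t : Fin k) (i : Fin n) => A t i • V i)
    refine hms.trans (Finset.sum_congr rfl fun r _ => ?_)
    have h5 := (Matrix.detRowAlternating (R := ℝ) (n := Fin k)).toMultilinearMap.map_smul_univ
      (fun t => A t (r t)) (fun t => V (r t))
    exact h5.trans (by rw [smul_eq_mul]; rfl)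
  rw [h1, ← Finset.sum_filter_add_sum_filter_not Finset.univ (fun r => Function.Injective r)]
  have h2 : ∑ r ∈ Finset.univ.filter (fun r : Fin k → Fin n => ¬ Function.Injective r),
      (∏ t, A t (r t)) * (V.submatrix r id).det = 0 := by
    apply Finset.sum_eq_zero
    intro r hr
    rw [Finset.mem_filter] at hr
    obtain ⟨a, b, hab, hne⟩ := Function.not_injective_iff.mp hr.2
    have hz : (V.submatrix r id).det = 0 :=
      Matrix.det_zero_of_row_eq hne (by funext m; simp [Matrix.submatrix_apply, hab])
    rw [hz, mul_zero]
  rw [h2, add_zero]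
  have h3 : ∑ p : Idx n k × Equiv.Perm (Fin k),
        (∏ t, A t (ordI p.1 (p.2 t))) * (V.submatrix (fun t => ordI p.1 (p.2 t)) id).det
      = ∑ r ∈ Finset.univ.filter (fun r : Fin k → Fin n => Function.Injective r),
        (∏ t, A t (r t)) * (V.submatrix r id).det := by
    refine Finset.sum_bij (fun p _ => fun t => ordI p.1 (p.2 t)) ?_ ?_ ?_ ?_
    · intro p _
      rw [Finset.mem_filter]
      exact ⟨Finset.mem_univ _, (ordI_inj p.1).comp p.2.injective⟩
    · intro p1 _ p2 _ hfe
      replace hfe : (fun t => ordI p1.1 (p1.2 t)) = (fun t => ordI p2.1 (p2.2 t)) := hfe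
      have himg : p1.1 = p2.1 := by
        apply Subtype.ext
        have e1 : Finset.image (fun t => ordI p1.1 (p1.2 t)) Finset.univ = p1.1.1 := by
          rw [show (fun t => ordI p1.1 (p1.2 t)) = (ordI p1.1) ∘ p1.2 from rfl,
            ← Finset.image_image, Finset.image_univ_equiv, ordI_image]
        have e2 : Finset.image (fun t => ordI p2.1 (p2.2 t)) Finset.univ = p2.1.1 := by
          rw [show (fun t => ordI p2.1 (p2.2 t)) = (ordI p2.1) ∘ p2.2 from rfl,
            ← Finset.image_image, Finset.image_univ_equiv, ordI_image]
        rw [← e1, ← e2, hfe]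
      obtain ⟨I1, σ1⟩ := p1
      obtain ⟨I2, σ2⟩ := p2
      simp only at himg hfe
      subst himg
      have hσ : σ1 = σ2 := by
        apply Equiv.ext
        intro t
        exact ordI_inj I1 (congrFun hfe t)
      rw [hσ]
    · intro r hr
      rw [Finset.mem_filter] at hr
      have hinj := hr.2
      have hcard : (Finset.image r Finset.univ).card = k := by
        rw [Finset.card_image_of_injective _ hinj, Finset.card_univ, Fintype.card_fin]
      refine ⟨(⟨Finset.image r Finset.univ, hcard⟩, ?_), Finset.mem_univ _, ?_⟩
      case refine_1 =>
        have hmem : ∀ t, r t ∈ (⟨Finset.image r Finset.univ, hcard⟩ : Idx n k).1 :=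
          fun t => Finset.mem_image_of_mem r (Finset.mem_univ t)
        refine Equiv.ofBijective (fun t =>
          ((Finset.image r Finset.univ).orderIsoOfFin hcard).symm ⟨r t, hmem t⟩)
          (Finite.injective_iff_bijective.mp ?_)
        intro a b hab
        have h' := congrArg (fun z => (((Finset.image r Finset.univ).orderIsoOfFin hcard) z : Fin n)) hab
        simp only [OrderIso.apply_symm_apply] at h'
        exact hinj h'
      case refine_2 =>
        funext t
        show ordI _ _ = r t
        simp only [Equiv.ofBijective_apply, ordI]
        rw [OrderIso.apply_symm_apply]
    · intro p _
      rfl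
  rw [← h3, Fintype.sum_prod_type]
  refine Finset.sum_congr rfl fun I _ => ?_
  rw [det_eq_sum_perm (A.submatrix id (ordI I)), Finset.sum_mul]
  refine Finset.sum_congr rfl fun σ _ => ?_
  have hdet : (V.submatrix (fun t => ordI I (σ t)) id).det
      = ((Equiv.Perm.sign σ : ℤ) : ℝ) * (V.submatrix (ordI I) id).det := by
    rw [show (V.submatrix (fun t => ordI I (σ t)) id)
        = (V.submatrix (ordI I) id).submatrix σ id from rfl, Matrix.det_permute]
  rw [hdet]
  have hprod : ∏ t, A t (ordI I (σ t)) = ∏ t, (A.submatrix id (ordI I)) t (σ t) := rfl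
  rw [hprod]
  ring
lemma dnu_expand (j : Fin (n+1)) (v : Fin n → ℝ) :
    dnu n j v = ∑ i, dnu n j (Pi.single i 1) * v i := by
  induction j using Fin.cases with
  | zero =>
    simp only [dnu, Fin.cases_zero]
    rw [← Finset.sum_neg_distrib]
    refine Finset.sum_congr rfl fun i _ => ?_
    simp
  | succ i =>
    simp [dnu, Pi.single_apply, eq_comm]

/-- Coefficient of `dx^I` in the Whitney form of the face `S`. -/
def wfc (S : Faces n k) (I : Idx n k) (x : Fin n → ℝ) : ℝ :=
  (Nat.factorial k : ℝ) * ∑ j : Fin (k+1), (-1:ℝ)^(j:ℕ) * nu n (vS S j) x *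
    (Matrix.of fun (t : Fin k) (i : Fin k) =>
      dnu n (vS S (j.succAbove t)) (Pi.single (ordI I i) 1)).det

lemma dxI_eq (I : Idx n k) (v : Fin k → Fin n → ℝ) :
    dxI I v = ((Matrix.of fun (i : Fin n) (m : Fin k) => v m i).submatrix (ordI I) id).det := rfl

lemma whitneyFace_eq (S : Faces n k) (x : Fin n → ℝ) (v : Fin k → Fin n → ℝ) :
    whitneyFace S x v = ∑ I : Idx n k, wfc S I x * dxI I v := by
  rw [whitneyFace]
  have key : ∀ r : Fin k → Fin (n+1),
      (Matrix.of fun (t : Fin k) (m : Fin k) => dnu n (r t) (v m)).det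
      = ∑ I : Idx n k,
          (Matrix.of fun (t : Fin k) (i : Fin k) => dnu n (r t) (Pi.single (ordI I i) 1)).det
            * dxI I v := by
    intro r
    have hm : (Matrix.of fun (t : Fin k) (m : Fin k) => dnu n (r t) (v m)) =
        (Matrix.of fun (t : Fin k) (i : Fin n) => dnu n (r t) (Pi.single i 1)) *
          (Matrix.of fun (i : Fin n) (m : Fin k) => v m i) := by
      ext t m
      rw [Matrix.mul_apply]
      exact dnu_expand (r t) (v m)
    rw [hm, cauchyBinet]
    exact Finset.sum_congr rfl fun I _ => by rw [dxI_eq]; rfl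
  calc (Nat.factorial k : ℝ) * ∑ j : Fin (k+1), (-1 : ℝ) ^ (j : ℕ) *
      nu n ((S.1.orderIsoOfFin S.2 j : Fin (n+1))) x *
      (Matrix.of fun (t : Fin k) (m2 : Fin k) =>
        dnu n ((S.1.orderIsoOfFin S.2 (j.succAbove t) : Fin (n+1))) (v m2)).det
      = ∑ j : Fin (k+1), ∑ I : Idx n k, (Nat.factorial k : ℝ) * ((-1 : ℝ) ^ (j : ℕ) *
          nu n (vS S j) x *
          ((Matrix.of fun (t : Fin k) (i : Fin k) =>
            dnu n (vS S (j.succAbove t)) (Pi.single (ordI I i) 1)).det * dxI I v)) := by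
        rw [Finset.mul_sum]
        refine Finset.sum_congr rfl fun j _ => ?_
        show (Nat.factorial k : ℝ) * ((-1 : ℝ) ^ (j : ℕ) * nu n (vS S j) x *
          (Matrix.of fun (t : Fin k) (m2 : Fin k) =>
            dnu n (vS S (j.succAbove t)) (v m2)).det) = _
        rw [key (fun t => vS S (j.succAbove t)), Finset.mul_sum, Finset.mul_sum]
    _ = ∑ I : Idx n k, wfc S I x * dxI I v := by
        rw [Finset.sum_comm]
        refine Finset.sum_congr rfl fun I _ => ?_
        rw [wfc, Finset.mul_sum, Finset.sum_mul]
        refine Finset.sum_congr rfl fun j _ => ?_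
        ring

/-- Coefficients of the Whitney form of a cochain `c`. -/
def wc (c : Faces n k → ℝ) (I : Idx n k) (x : Fin n → ℝ) : ℝ := ∑ S, c S * wfc S I x

lemma whitney_eq (c : Faces n k → ℝ) : whitney c = formEval (wc c) := by
  funext x v
  rw [whitney, formEval]
  calc ∑ S, c S * whitneyFace S x v
      = ∑ S, ∑ I : Idx n k, c S * (wfc S I x * dxI I v) := by
        refine Finset.sum_congr rfl fun S _ => ?_
        rw [whitneyFace_eq, Finset.mul_sum]
    _ = ∑ I : Idx n k, wc c I x * dxI I v := by
        rw [Finset.sum_comm]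
        refine Finset.sum_congr rfl fun I _ => ?_
        rw [wc, Finset.sum_mul]
        exact Finset.sum_congr rfl fun S _ => by ring

lemma affine_zero : IsAffineFn (fun _ : Fin n → ℝ => (0:ℝ)) :=
  ⟨0, 0, fun x => by simp⟩

lemma affine_const_mul {f : (Fin n → ℝ) → ℝ} (hf : IsAffineFn f) (r : ℝ) :
    IsAffineFn (fun x => r * f x) := by
  obtain ⟨a, b, h⟩ := hf
  refine ⟨fun i => r * a i, r * b, fun x => ?_⟩
  show r * f x = _
  rw [h x, mul_add, Finset.mul_sum]
  refine congrArg (· + r * b) (Finset.sum_congr rfl fun i _ => by ring)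

lemma affine_mul_const {f : (Fin n → ℝ) → ℝ} (hf : IsAffineFn f) (r : ℝ) :
    IsAffineFn (fun x => f x * r) := by
  have h := affine_const_mul hf r
  simpa [mul_comm] using h

lemma affine_add {f g : (Fin n → ℝ) → ℝ} (hf : IsAffineFn f) (hg : IsAffineFn g) :
    IsAffineFn (fun x => f x + g x) := by
  obtain ⟨a, b, h⟩ := hf
  obtain ⟨a', b', h'⟩ := hg
  refine ⟨fun i => a i + a' i, b + b', fun x => ?_⟩
  show f x + g x = _
  rw [h x, h' x]
  rw [show (∑ i, (a i + a' i) * x i) = ∑ i, (a i * x i + a' i * x i) from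
    Finset.sum_congr rfl fun i _ => by ring, Finset.sum_add_distrib]
  ring

lemma affine_sub {f g : (Fin n → ℝ) → ℝ} (hf : IsAffineFn f) (hg : IsAffineFn g) :
    IsAffineFn (fun x => f x - g x) := by
  have h := affine_add hf (affine_const_mul hg (-1))
  simpa [sub_eq_add_neg, neg_one_mul] using h

lemma affine_sum {ι : Type*} (s : Finset ι) (f : ι → (Fin n → ℝ) → ℝ)
    (hf : ∀ i ∈ s, IsAffineFn (f i)) : IsAffineFn (fun x => ∑ i ∈ s, f i x) := by
  classical
  induction s using Finset.induction_on with
  | empty => simpa using affine_zero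
  | @insert a s ha ih =>
    have h1 : IsAffineFn (fun x => f a x + ∑ i ∈ s, f i x) :=
      affine_add (hf a (Finset.mem_insert_self a s))
        (ih fun i hi => hf i (Finset.mem_insert_of_mem hi))
    have h2 : (fun x => ∑ i ∈ insert a s, f i x) = fun x => f a x + ∑ i ∈ s, f i x := by
      funext x; rw [Finset.sum_insert ha]
    rw [h2]
    exact h1

lemma nu_affine (j : Fin (n+1)) : IsAffineFn (nu n j) := by
  induction j using Fin.cases with
  | zero =>
    refine ⟨fun _ => -1, 1, fun x => ?_⟩
    show 1 - ∑ i, x i = _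
    rw [show (∑ i, (fun _ => (-1:ℝ)) i * x i) = -∑ i, x i from by
      rw [← Finset.sum_neg_distrib]; exact Finset.sum_congr rfl fun i _ => by ring]
    ring
  | succ i =>
    refine ⟨Pi.single i 1, 0, fun x => ?_⟩
    show x i = _
    simp [Pi.single_apply, Finset.sum_ite_eq', ite_mul]

lemma wfc_affine (S : Faces n k) (I : Idx n k) : IsAffineFn (wfc S I) := by
  have h1 : IsAffineFn (fun x => ∑ j : Fin (k+1), (-1:ℝ)^(j:ℕ) * nu n (vS S j) x *
      (Matrix.of fun (t : Fin k) (i : Fin k) =>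
        dnu n (vS S (j.succAbove t)) (Pi.single (ordI I i) 1)).det) := by
    refine affine_sum _ _ fun j _ => ?_
    have h := affine_mul_const (affine_const_mul (nu_affine (vS S j)) ((-1:ℝ)^(j:ℕ)))
      ((Matrix.of fun (t : Fin k) (i : Fin k) =>
        dnu n (vS S (j.succAbove t)) (Pi.single (ordI I i) 1)).det)
    simpa [mul_assoc] using h
  exact affine_const_mul h1 _

lemma wc_affine (c : Faces n k → ℝ) (I : Idx n k) : IsAffineFn (wc c I) :=
  affine_sum _ _ fun S _ => affine_const_mul (wfc_affine S I) (c S)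
def succEmb (n : ℕ) : Fin n ↪ Fin (n+1) := ⟨Fin.succ, Fin.succ_injective n⟩

lemma ordI_strictMono (I : Idx n k) : StrictMono (ordI I) := fun a b h => by
  have := (I.1.orderIsoOfFin I.2).strictMono h
  exact this

def face0 (I : Idx n k) : Faces n k :=
  ⟨insert 0 (I.1.map (succEmb n)), by
    rw [Finset.card_insert_of_notMem, Finset.card_map, I.2]
    intro hc
    obtain ⟨a, _, ha⟩ := Finset.mem_map.mp hc
    exact Fin.succ_ne_zero a ha⟩

lemma vS_face0 (I : Idx n k) :
    vS (face0 I) = fun j => Fin.cases 0 (fun t => (ordI I t).succ) j := by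
  have hmono : StrictMono (fun j : Fin (k+1) =>
      (Fin.cases 0 (fun t => (ordI I t).succ) j : Fin (n+1))) := by
    intro c d hcd
    induction c using Fin.cases with
    | zero =>
      induction d using Fin.cases with
      | zero => exact absurd hcd (lt_irrefl _)
      | succ t => simpa using Fin.succ_pos (ordI I t)
    | succ s =>
      induction d using Fin.cases with
      | zero => exact absurd hcd (Fin.not_lt_zero _).elim
      | succ t =>
        simp only [Fin.cases_succ]
        exact Fin.succ_lt_succ_iff.mpr (ordI_strictMono I (Fin.succ_lt_succ_iff.mp hcd))
  have hmem : ∀ j : Fin (k+1),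
      (Fin.cases 0 (fun t => (ordI I t).succ) j : Fin (n+1)) ∈ (face0 I).1 := by
    intro j
    induction j using Fin.cases with
    | zero => exact Finset.mem_insert_self _ _
    | succ t =>
      simp only [Fin.cases_succ]
      exact Finset.mem_insert_of_mem (Finset.mem_map_of_mem (succEmb n) (ordI_mem I t))
  have h := Finset.orderEmbOfFin_unique (face0 I).2 hmem hmono
  funext j
  exact (congrFun h j).symm

lemma faceDir_face0 (I : Idx n k) (w : Fin k → ℝ) :
    faceDir (face0 I) w = ∑ s, w s • (Pi.single (ordI I s) (1:ℝ) : Fin n → ℝ) := by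
  show ∑ s, w s • (vert n (vS (face0 I) s.succ) - vert n (vS (face0 I) 0)) = _
  refine Finset.sum_congr rfl fun s _ => ?_
  rw [vS_face0]
  simp [vert]

lemma facePt_face0 (I : Idx n k) (y : Fin k → ℝ) :
    facePt (face0 I) y = ∑ s, y s • (Pi.single (ordI I s) (1:ℝ) : Fin n → ℝ) := by
  rw [show facePt (face0 I) y = vert n (vS (face0 I) 0) + faceDir (face0 I) y from rfl,
    faceDir_face0, vS_face0]
  simp [vert]

lemma idx_exists_not_mem {I' I : Idx n k} (h : I' ≠ I) : ∃ r, ordI I' r ∉ I.1 := by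
  by_contra hc
  push_neg at hc
  apply h
  apply Subtype.ext
  apply Finset.eq_of_subset_of_card_le
  · intro x hx
    obtain ⟨r, hr⟩ := ordI_surj I' hx
    exact hr ▸ hc r
  · rw [I.2, I'.2]

lemma dxI_vecs (I I' : Idx n k) (w : Fin k → Fin k → ℝ) :
    dxI I' (fun a => ∑ s, w a s • (Pi.single (ordI I s) (1:ℝ) : Fin n → ℝ)) =
      (if I' = I then 1 else 0) * (Matrix.of fun r c => w c r).det := by
  have hentry : ∀ (r c : Fin k), (∑ s, w c s • (Pi.single (ordI I s) (1:ℝ) : Fin n → ℝ)) (ordI I' r)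
      = ∑ s, w c s * (if ordI I' r = ordI I s then 1 else 0) := by
    intro r c
    rw [Finset.sum_apply]
    refine Finset.sum_congr rfl fun s _ => ?_
    simp [Pi.single_apply]
  by_cases h : I' = I
  · subst h
    rw [if_pos rfl, one_mul]
    show (Matrix.of fun r c => (∑ s, w c s • (Pi.single (ordI I' s) (1:ℝ) : Fin n → ℝ)) (ordI I' r)).det = _
    congr 1
    ext r c
    simp only [Matrix.of_apply]
    rw [hentry]
    simp [(ordI_inj I').eq_iff]
  · rw [if_neg h, zero_mul]
    obtain ⟨r₀, hr₀⟩ := idx_exists_not_mem h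
    apply Matrix.det_eq_zero_of_row_eq_zero r₀
    intro c
    show (∑ s, w c s • (Pi.single (ordI I s) (1:ℝ) : Fin n → ℝ)) (ordI I' r₀) = 0
    rw [hentry]
    apply Finset.sum_eq_zero
    intro s _
    have : (ordI I' r₀ = ordI I s) = False := by
      simp only [eq_iff_iff, iff_false]
      intro hh
      exact hr₀ (hh ▸ ordI_mem I s)
    simp [this]

lemma zero_mem_stdSimp : (0 : Fin k → ℝ) ∈ stdSimp k := by
  constructor
  · intro i; simp
  · simp

lemma single_mem_stdSimp (s : Fin k) : (Pi.single s (1:ℝ)) ∈ stdSimp k := by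
  constructor
  · intro i
    rw [Pi.single_apply]
    split <;> norm_num
  · rw [Finset.sum_pi_single']
    simp
lemma sum_ite_single_smul (u : Fin k → Fin n → ℝ) (s₀ : Fin k) :
    ∑ s, (if s = s₀ then (1:ℝ) else 0) • u s = u s₀ := by
  simp [ite_smul]

lemma affine_eval_single (f : Idx n k → (Fin n → ℝ) → ℝ) (a : Idx n k → Fin n → ℝ)
    (b : Idx n k → ℝ) (hf : ∀ I x, f I x = (∑ i, a I i * x i) + b I) (I : Idx n k) (i : Fin n) :
    f I (Pi.single i 1) = a I i + b I := by
  rw [hf]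
  congr 1
  simp [Pi.single_apply, mul_ite]

lemma step1 (f : Idx n k → (Fin n → ℝ) → ℝ)
    (h0 : ∀ S : Faces n k, ∀ y ∈ stdSimp k, ∀ w : Fin k → Fin k → ℝ,
      formEval f (facePt S y) (fun i => faceDir S (w i)) = 0) :
    ∀ I : Idx n k, ∀ y ∈ stdSimp k,
      f I (∑ s, y s • (Pi.single (ordI I s) (1:ℝ) : Fin n → ℝ)) = 0 := by
  intro I y hy
  have h2 := h0 (face0 I) y hy (fun c => Pi.single c 1)
  rw [formEval] at h2
  have h3 : ∀ I' : Idx n k, dxI I' (fun c => faceDir (face0 I) (Pi.single c 1))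
      = (if I' = I then 1 else 0) := by
    intro I'
    have hd := dxI_vecs I I' (fun c s => (Pi.single c (1:ℝ) : Fin k → ℝ) s)
    rw [show (fun c => faceDir (face0 I) (Pi.single c 1)) =
      (fun c => ∑ s, (Pi.single c (1:ℝ) : Fin k → ℝ) s • (Pi.single (ordI I s) (1:ℝ) : Fin n → ℝ))
        from funext fun c => faceDir_face0 I _, hd]
    rw [show (Matrix.of fun r c => (Pi.single c (1:ℝ) : Fin k → ℝ) r)
        = (1 : Matrix (Fin k) (Fin k) ℝ) from id_matrix _ rfl, Matrix.det_one, mul_one]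
  rw [Finset.sum_congr rfl (fun I' _ => by rw [h3 I'])] at h2
  rw [Finset.sum_eq_single I (fun I' _ hne => by rw [if_neg hne, mul_zero])
    (fun hh => absurd (Finset.mem_univ I) hh), if_pos rfl, mul_one, facePt_face0] at h2
  exact h2

lemma step1b (f : Idx n k → (Fin n → ℝ) → ℝ) (a : Idx n k → Fin n → ℝ) (b : Idx n k → ℝ)
    (hf : ∀ I x, f I x = (∑ i, a I i * x i) + b I)
    (h0 : ∀ S : Faces n k, ∀ y ∈ stdSimp k, ∀ w : Fin k → Fin k → ℝ,
      formEval f (facePt S y) (fun i => faceDir S (w i)) = 0) :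
    ∀ I, b I = 0 := by
  intro I
  have h := step1 f h0 I 0 zero_mem_stdSimp
  have hz : (∑ s, (0 : Fin k → ℝ) s • (Pi.single (ordI I s) (1:ℝ) : Fin n → ℝ)) = 0 := by
    simp
  rw [hz, hf] at h
  simpa using h

lemma step1c (f : Idx n k → (Fin n → ℝ) → ℝ) (a : Idx n k → Fin n → ℝ) (b : Idx n k → ℝ)
    (hf : ∀ I x, f I x = (∑ i, a I i * x i) + b I)
    (h0 : ∀ S : Faces n k, ∀ y ∈ stdSimp k, ∀ w : Fin k → Fin k → ℝ,
      formEval f (facePt S y) (fun i => faceDir S (w i)) = 0) :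
    ∀ I : Idx n k, ∀ i ∈ I.1, a I i = 0 := by
  intro I i hi
  obtain ⟨s₀, rfl⟩ := ordI_surj I hi
  have h := step1 f h0 I (Pi.single s₀ 1) (single_mem_stdSimp s₀)
  have hpt : (∑ s, (Pi.single s₀ (1:ℝ) : Fin k → ℝ) s • (Pi.single (ordI I s) (1:ℝ) : Fin n → ℝ))
      = Pi.single (ordI I s₀) 1 := by
    rw [Finset.sum_congr rfl (fun s _ => by rw [show (Pi.single s₀ (1:ℝ) : Fin k → ℝ) s
      = (if s = s₀ then (1:ℝ) else 0) from Pi.single_apply s₀ 1 s])]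
    exact sum_ite_single_smul _ s₀
  rw [hpt, affine_eval_single f a b hf, step1b f a b hf h0, add_zero] at h
  exact h

lemma step2 (f : Idx n k → (Fin n → ℝ) → ℝ) (a : Idx n k → Fin n → ℝ) (b : Idx n k → ℝ)
    (hf : ∀ I x, f I x = (∑ i, a I i * x i) + b I)
    (h0 : ∀ S : Faces n k, ∀ y ∈ stdSimp k, ∀ w : Fin k → Fin k → ℝ,
      formEval f (facePt S y) (fun i => faceDir S (w i)) = 0) :
    ∀ (I : Idx n k) (i : Fin n), i ∉ I.1 → a I i = 0 := by
  have hb := step1b f a b hf h0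
  have hmem := step1c f a b hf h0
  intro I i hi
  have hJcard : (insert i I.1).card = k + 1 := by rw [Finset.card_insert_of_notMem hi, I.2]
  set J : Finset (Fin n) := insert i I.1 with hJ
  set oJ : Fin (k+1) → Fin n := fun t => (J.orderIsoOfFin hJcard t : Fin n) with hoJ
  have oJ_mem : ∀ t, oJ t ∈ J := fun t => (J.orderIsoOfFin hJcard t).2
  have oJ_inj : Function.Injective oJ := fun c d h =>
    (J.orderIsoOfFin hJcard).injective (Subtype.ext h)
  have oJ_surj : ∀ x ∈ J, ∃ t, oJ t = x := fun x hx =>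
    ⟨(J.orderIsoOfFin hJcard).symm ⟨x, hx⟩, by
      show ((J.orderIsoOfFin hJcard) ((J.orderIsoOfFin hJcard).symm ⟨x, hx⟩) : Fin n) = x
      rw [OrderIso.apply_symm_apply]⟩
  have oJ_mono : StrictMono oJ := fun c d h => (J.orderIsoOfFin hJcard).strictMono h
  set S2 : Faces n k := ⟨J.map (succEmb n), by rw [Finset.card_map]; exact hJcard⟩ with hS2
  have hvS2 : vS S2 = fun t => (oJ t).succ := by
    have hmono : StrictMono (fun t : Fin (k+1) => (oJ t).succ) := fun c d h =>
      Fin.succ_lt_succ_iff.mpr (oJ_mono h)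
    have hm : ∀ t, (oJ t).succ ∈ S2.1 := fun t => Finset.mem_map_of_mem _ (oJ_mem t)
    have h := Finset.orderEmbOfFin_unique S2.2 hm hmono
    funext t
    exact (congrFun h t).symm
  set u : Fin k → Fin n → ℝ :=
    fun s => (Pi.single (oJ s.succ) (1:ℝ) : Fin n → ℝ) - Pi.single (oJ 0) 1 with hu
  have hfaceDir : ∀ w' : Fin k → ℝ, faceDir S2 w' = ∑ s, w' s • u s := by
    intro w'
    show ∑ s, w' s • (vert n (vS S2 s.succ) - vert n (vS S2 0)) = _
    refine Finset.sum_congr rfl fun s _ => ?_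
    rw [hvS2]
    simp [vert, hu]
  have hfacePt : ∀ y : Fin k → ℝ,
      facePt S2 y = (Pi.single (oJ 0) (1:ℝ) : Fin n → ℝ) + ∑ s, y s • u s := by
    intro y
    rw [show facePt S2 y = vert n (vS S2 0) + faceDir S2 y from rfl, hfaceDir, hvS2]
    simp [vert]
  have hiJ : i ∈ J := Finset.mem_insert_self i I.1
  have helperD : ∀ m ∈ J, ∑ s : Fin k, (if oJ s.succ = m then (1:ℝ) else 0) • u s
      = (Pi.single m (1:ℝ) : Fin n → ℝ) - Pi.single (oJ 0) 1 := by
    intro m hm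
    obtain ⟨t₀, ht₀⟩ := oJ_surj m hm
    subst ht₀
    induction t₀ using Fin.cases with
    | zero =>
      rw [Finset.sum_eq_zero, sub_self]
      intro s _
      rw [if_neg (fun h => Fin.succ_ne_zero s (oJ_inj h)), zero_smul]
    | succ s₀ =>
      have hind : ∀ s : Fin k, (if oJ s.succ = oJ s₀.succ then (1:ℝ) else 0)
          = if s = s₀ then 1 else 0 := by
        intro s
        by_cases h : s = s₀
        · subst h; simp
        · rw [if_neg h, if_neg (fun hh => h (Fin.succ_injective _ (oJ_inj hh)))]
      rw [Finset.sum_congr rfl (fun s _ => by rw [hind s]), sum_ite_single_smul]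
  set yy : Fin k → ℝ := fun s => if oJ s.succ = i then 1 else 0 with hyy
  have hysum : ∑ s, yy s • u s = (Pi.single i (1:ℝ) : Fin n → ℝ) - Pi.single (oJ 0) 1 :=
    helperD i hiJ
  have hyMem : yy ∈ stdSimp k := by
    constructor
    · intro s
      rw [hyy]
      dsimp only
      split <;> norm_num
    · obtain ⟨t₀, ht₀⟩ := oJ_surj i hiJ
      induction t₀ using Fin.cases with
      | zero =>
        have hz : ∀ s ∈ Finset.univ, yy s = 0 := by
          intro s _
          rw [hyy]
          dsimp only
          rw [if_neg (fun h => Fin.succ_ne_zero s (oJ_inj (h.trans ht₀.symm)))]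
        rw [Finset.sum_eq_zero hz]
        norm_num
      | succ s₀ =>
        have hind : ∀ s : Fin k, yy s = if s = s₀ then 1 else 0 := by
          intro s
          rw [hyy]
          dsimp only
          by_cases h : s = s₀
          · subst h; rw [if_pos rfl, if_pos ht₀]
          · rw [if_neg h, if_neg (fun hh => h (Fin.succ_injective _
              (oJ_inj (hh.trans ht₀.symm))))]
        rw [Finset.sum_congr rfl (fun s _ => hind s)]
        simp
  have hfacePtEval : facePt S2 yy = Pi.single i 1 := by
    rw [hfacePt, hysum]
    abel
  set ww : Fin k → Fin k → ℝ :=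
    fun c s => (if oJ s.succ = ordI I c then 1 else 0) - (if oJ s.succ = i then 1 else 0) with hww
  have hdir : ∀ c, faceDir S2 (ww c)
      = (Pi.single (ordI I c) (1:ℝ) : Fin n → ℝ) - Pi.single i 1 := by
    intro c
    rw [hfaceDir]
    have hsplit : ∑ s, ww c s • u s
        = (∑ s, (if oJ s.succ = ordI I c then (1:ℝ) else 0) • u s)
          - ∑ s, (if oJ s.succ = i then (1:ℝ) else 0) • u s := by
      rw [← Finset.sum_sub_distrib]
      refine Finset.sum_congr rfl fun s _ => ?_
      rw [hww]
      dsimp only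
      rw [sub_smul]
    rw [hsplit, helperD _ (Finset.mem_insert_of_mem (ordI_mem I c)), helperD i hiJ]
    abel
  have h := h0 S2 yy hyMem ww
  rw [formEval] at h
  rw [show (fun c => faceDir S2 (ww c))
    = fun c => (Pi.single (ordI I c) (1:ℝ) : Fin n → ℝ) - Pi.single i 1 from funext hdir,
    hfacePtEval] at h
  have hterm : ∀ I' : Idx n k, I' ≠ I → f I' (Pi.single i 1) *
      dxI I' (fun c => (Pi.single (ordI I c) (1:ℝ) : Fin n → ℝ) - Pi.single i 1) = 0 := by
    intro I' hne
    by_cases hii : i ∈ I'.1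
    · rw [affine_eval_single f a b hf, hmem I' i hii, hb, add_zero, zero_mul]
    · have hrow : ∃ r₀, ordI I' r₀ ∉ J := by
        by_contra hc
        push_neg at hc
        apply hne
        apply Subtype.ext
        apply Finset.eq_of_subset_of_card_le
        · intro x hx
          obtain ⟨r, hr⟩ := ordI_surj I' hx
          have hxJ : x ∈ J := hr ▸ hc r
          rcases Finset.mem_insert.mp hxJ with h1 | h1
          · exact absurd (h1 ▸ hx) hii
          · exact h1
        · rw [I.2, I'.2]
      obtain ⟨r₀, hr₀⟩ := hrow
      have hdz : dxI I'
          (fun c => (Pi.single (ordI I c) (1:ℝ) : Fin n → ℝ) - Pi.single i 1) = 0 := by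
        apply Matrix.det_eq_zero_of_row_eq_zero r₀
        intro c
        show ((Pi.single (ordI I c) (1:ℝ) - Pi.single i 1 : Fin n → ℝ)) (ordI I' r₀) = 0
        have h1 : ordI I' r₀ ≠ ordI I c :=
          fun h => hr₀ (h ▸ Finset.mem_insert_of_mem (ordI_mem I c))
        have h2 : ordI I' r₀ ≠ i := fun h => hr₀ (h ▸ hiJ)
        simp [Pi.single_apply, h1, h2]
      rw [hdz, mul_zero]
  have hI : dxI I (fun c => (Pi.single (ordI I c) (1:ℝ) : Fin n → ℝ) - Pi.single i 1) = 1 := by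
    have hone : (Matrix.of fun r c =>
        ((Pi.single (ordI I c) (1:ℝ) - Pi.single i 1 : Fin n → ℝ)) (ordI I r))
        = (1 : Matrix (Fin k) (Fin k) ℝ) := by
      ext r c
      have h2 : ordI I r ≠ i := fun h => hi (h ▸ ordI_mem I r)
      by_cases hrc : r = c
      · subst hrc
        simp [Matrix.one_apply, Pi.single_apply, h2]
      · have hne : ordI I r ≠ ordI I c := fun h => hrc (ordI_inj I h)
        simp [Matrix.one_apply, Pi.single_apply, h2, hne, hrc]
    exact (congrArg Matrix.det hone).trans Matrix.det_one
  rw [Finset.sum_eq_single I (fun I' _ hne => hterm I' hne)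
    (fun hh => absurd (Finset.mem_univ I) hh), hI, mul_one,
    affine_eval_single f a b hf, hb, add_zero] at h
  exact h
lemma unisolvence (f : Idx n k → (Fin n → ℝ) → ℝ) (hfa : ∀ I, IsAffineFn (f I))
    (h0 : ∀ S : Faces n k, ∀ y ∈ stdSimp k, ∀ w : Fin k → Fin k → ℝ,
      formEval f (facePt S y) (fun i => faceDir S (w i)) = 0) :
    ∀ x v, formEval f x v = 0 := by
  classical
  choose a b hf using hfa
  have hf' : ∀ I x, f I x = (∑ i, a I i * x i) + b I := hf
  have hb := step1b f a b hf' h0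
  have h1 := step1c f a b hf' h0
  have h2 := step2 f a b hf' h0
  have hzero : ∀ I x, f I x = 0 := by
    intro I x
    rw [hf', hb, add_zero]
    apply Finset.sum_eq_zero
    intro i _
    by_cases hi : i ∈ I.1
    · rw [h1 I i hi, zero_mul]
    · rw [h2 I i hi, zero_mul]
  intro x v
  rw [formEval]
  exact Finset.sum_eq_zero fun I _ => by rw [hzero, zero_mul]

end WhitneyAux


/-- The Whitney map is a linear isomorphism from `k`-cochains onto the space `Λᵏₑ` of `k`-forms
with affine coefficients and constant pullbacks to `k`-faces; in particular the dimension of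
that space is the number `(n+1 choose k+1)` of `k`-faces. -/
theorem whitney_linear_iso {n k : ℕ} (hk : k ≤ n) :
    (∀ c d : {s : Finset (Fin (n+1)) // s.card = k+1} → ℝ,
      whitney (c + d) = fun x v => whitney c x v + whitney d x v) ∧
    (∀ (r : ℝ) (c : {s : Finset (Fin (n+1)) // s.card = k+1} → ℝ),
      whitney (r • c) = fun x v => r * whitney c x v) ∧
    Function.Injective (whitney (n := n) (k := k)) ∧
    Set.range (whitney (n := n) (k := k)) =
      {F | ∃ f : {s : Finset (Fin n) // s.card = k} → (Fin n → ℝ) → ℝ,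
        (∀ I, IsAffineFn (f I)) ∧ ConstOnFaces (formEval f) ∧ F = formEval f} ∧
    Nat.card {s : Finset (Fin (n+1)) // s.card = k+1} = Nat.choose (n+1) (k+1) := by
  refine ⟨?_, ?_, ?_, ?_, ?_⟩
  · intro c d
    funext x v
    simp [whitney, add_mul, Finset.sum_add_distrib]
  · intro r c
    funext x v
    simp [whitney, Finset.mul_sum, mul_assoc]
  · exact WhitneyAux.whitney_injective
  · ext F
    constructor
    · rintro ⟨c, rfl⟩
      refine ⟨WhitneyAux.wc c, fun I => WhitneyAux.wc_affine c I, ?_, WhitneyAux.whitney_eq c⟩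
      intro S
      refine ⟨c S * (Nat.factorial k : ℝ), fun y _ w => ?_⟩
      rw [← WhitneyAux.whitney_eq c]
      exact WhitneyAux.whitney_pullback c S y w
    · rintro ⟨f, hfa, hconst, rfl⟩
      classical
      choose cst hcst using hconst
      set c : WhitneyAux.Faces n k → ℝ := fun S => cst S / (Nat.factorial k : ℝ) with hc
      refine ⟨c, ?_⟩
      have hg : ∀ x v, formEval (fun I x => f I x - WhitneyAux.wc c I x) x v
          = formEval f x v - whitney c x v := by
        intro x v
        rw [WhitneyAux.whitney_eq c, formEval, formEval, formEval, ← Finset.sum_sub_distrib]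
        exact Finset.sum_congr rfl fun I _ => by ring
      have hga : ∀ I, IsAffineFn (fun x => f I x - WhitneyAux.wc c I x) :=
        fun I => WhitneyAux.affine_sub (hfa I) (WhitneyAux.wc_affine c I)
      have h0 : ∀ S : WhitneyAux.Faces n k, ∀ y ∈ stdSimp k, ∀ w : Fin k → Fin k → ℝ,
          formEval (fun I x => f I x - WhitneyAux.wc c I x) (facePt S y)
            (fun i => faceDir S (w i)) = 0 := by
        intro S y hy w
        rw [hg, hcst S y hy w, WhitneyAux.whitney_pullback c S y w, hc]
        rw [div_mul_cancel₀ _ (Nat.cast_ne_zero.mpr (Nat.factorial_ne_zero k) : (Nat.factorial k : ℝ) ≠ 0)]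
        exact sub_self _
      have hzero := WhitneyAux.unisolvence _ hga h0
      funext x v
      have h5 := hzero x v
      rw [hg] at h5
      linarith
  · rw [Nat.card_eq_fintype_card]
    rw [Fintype.card_finset_len]
    simp
end
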